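/- arXiv:1306.1007 — 2 statements merged into one kernel-verified Lean document; each statement's English description precedes it below -/
import Mathlib

section
/- Let V_line = m n + d N with m = p₁∧p₂ and d = p₂ − p₁ ≠ 0. Then for every real α, the point x = (m + α)d⁻¹ is a Euclidean vector lying on the line through p₁ and p₂, and conversely every point of that line has this form; equivalently, the conformal point X of x satisfies V_line ∧ X = 0. -/
noncomputable section
open scoped RealInnerProductSpace

/-- Euclidean 3-space. -/
abbrev E3 : Type := EuclideanSpace ℝ (Fin 3)

/-- The 5-dimensional space ℝ^{4,1}: Euclidean part plus coefficients of the
null vectors n (infinity) and n̄ (origin). -/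
abbrev V5 : Type := E3 × ℝ × ℝ

/-- Symmetric bilinear form of signature (4,1):
`⟪p,q⟫` on the Euclidean part, and `n·n̄ = -1` on the null pair. -/
def B5 : LinearMap.BilinForm ℝ V5 := LinearMap.mk₂ ℝ
  (fun x y => ⟪x.1, y.1⟫ - x.2.1 * y.2.2 - x.2.2 * y.2.1)
  (fun m₁ m₂ y => by simp only [Prod.fst_add, Prod.snd_add, inner_add_left]; ring)
  (fun c m y => by simp only [Prod.smul_fst, Prod.smul_snd, smul_eq_mul, real_inner_smul_left]; ring)
  (fun m y₁ y₂ => by simp only [Prod.fst_add, Prod.snd_add, inner_add_right]; ring)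
  (fun c m y => by simp only [Prod.smul_fst, Prod.smul_snd, smul_eq_mul, real_inner_smul_right]; ring)

/-- The quadratic form of R_{4,1}. -/
def Q5 : QuadraticForm ℝ V5 := B5.toQuadraticMap

/-- The Clifford geometric algebra R_{4,1}. -/
abbrev Cl : Type := CliffordAlgebra Q5

def ι5 : V5 →ₗ[ℝ] Cl := CliffordAlgebra.ι Q5

/-- Embedding of a Euclidean vector as a grade-1 element. -/
def ev (p : E3) : Cl := ι5 (p, 0, 0)

/-- The null vector n representing infinity. -/
def nInf : Cl := ι5 (0, 1, 0)

/-- The null vector n̄ representing the origin. -/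
def nOri : Cl := ι5 (0, 0, 1)

/-- The conformal point P = p + (1/2)p² n + n̄. -/
def cpt (p : E3) : Cl := ι5 (p, ⟪p, p⟫ / 2, 1)

/-- Outer (wedge) product of two vectors (grade-1 elements): antisymmetrized
geometric product. -/
def w2 (a b : Cl) : Cl := (2:ℝ)⁻¹ • (a * b - b * a)

/-- Outer (wedge) product of three vectors. -/
def w3 (a b c : Cl) : Cl := (6:ℝ)⁻¹ •
  (a*b*c - a*c*b - b*a*c + b*c*a + c*a*b - c*b*a)

/-- Outer (wedge) product of a vector with a bivector. -/
def vwB (v B : Cl) : Cl := (2:ℝ)⁻¹ • (v * B + B * v)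

/-- Left contraction of a vector into a bivector. -/
def lcontr (v B : Cl) : Cl := (2:ℝ)⁻¹ • (v * B - B * v)

/-- The Minkowski plane bivector N = n ∧ n̄. -/
def Nb : Cl := w2 nInf nOri

section Aux
open CliffordAlgebra

lemma B5_apply (v w : V5) : B5 v w = ⟪v.1, w.1⟫ - v.2.1 * w.2.2 - v.2.2 * w.2.1 := rfl

lemma Q5_apply (v : V5) : Q5 v = B5 v v :=
  LinearMap.BilinMap.toQuadraticMap_apply _ _

lemma gswap (u v : V5) (r : ℝ) (h : B5 u v = r) (h' : B5 v u = r) :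
    ∀ z : Cl, ι5 v * (ι5 u * z) = (2*r) • z - ι5 u * (ι5 v * z) := by
  intro z
  have key : ι5 v * ι5 u + ι5 u * ι5 v = algebraMap ℝ Cl (2*r) := by
    have h2 := CliffordAlgebra.ι_mul_ι_add_swap (Q := Q5) v u
    rw [ι5, h2]
    congr 1
    rw [QuadraticMap.polar]
    simp only [Q5, LinearMap.BilinMap.toQuadraticMap_apply, map_add, LinearMap.add_apply]
    rw [h, h']
    ring
  have h3 : (ι5 v * ι5 u) * z = (algebraMap ℝ Cl (2*r) - ι5 u * ι5 v) * z := by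
    rw [eq_sub_iff_add_eq.mpr key]
  rw [sub_mul, mul_assoc, mul_assoc, ← Algebra.smul_def, ← mul_assoc] at h3
  rw [← mul_assoc]
  exact h3

lemma gsq (u : V5) (r : ℝ) (h : B5 u u = r) :
    ∀ z : Cl, ι5 u * (ι5 u * z) = r • z := by
  intro z
  have key : ι5 u * ι5 u = algebraMap ℝ Cl r := by
    rw [ι5, CliffordAlgebra.ι_sq_scalar, Q5_apply, h]
  rw [← mul_assoc, key, Algebra.smul_def]

end Aux
section Aux2

lemma B_ee (p q : E3) : B5 (p,0,0) (q,0,0) = ⟪p,q⟫ := by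
  rw [B5_apply]; ring

lemma swap_ee (p q : E3) : ∀ z : Cl, ev q * (ev p * z) = (2*⟪p,q⟫) • z - ev p * (ev q * z) :=
  gswap (p,0,0) (q,0,0) ⟪p,q⟫ (B_ee p q) (by rw [B_ee]; exact real_inner_comm p q)

lemma swap_ee' (p q : E3) : ev q * ev p = (2*⟪p,q⟫) • (1:Cl) - ev p * ev q := by
  simpa using swap_ee p q 1

lemma sq_e (p : E3) : ∀ z : Cl, ev p * (ev p * z) = ⟪p,p⟫ • z :=
  gsq (p,0,0) ⟪p,p⟫ (B_ee p p)

lemma sq_e' (p : E3) : ev p * ev p = ⟪p,p⟫ • (1:Cl) := by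
  simpa using sq_e p 1

lemma swap_ne (p : E3) : ∀ z : Cl, nInf * (ev p * z) = -(ev p * (nInf * z)) := by
  intro z
  have := gswap (p,0,0) ((0,1,0) : V5) 0 (by rw [B5_apply]; simp) (by rw [B5_apply]; simp) z
  simpa [nInf, ev] using this

lemma swap_ne' (p : E3) : nInf * ev p = -(ev p * nInf) := by
  simpa using swap_ne p 1

lemma swap_oe (p : E3) : ∀ z : Cl, nOri * (ev p * z) = -(ev p * (nOri * z)) := by
  intro z
  have := gswap (p,0,0) ((0,0,1) : V5) 0 (by rw [B5_apply]; simp) (by rw [B5_apply]; simp) z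
  simpa [nOri, ev] using this

lemma swap_oe' (p : E3) : nOri * ev p = -(ev p * nOri) := by
  simpa using swap_oe p 1

lemma swap_on : ∀ z : Cl, nOri * (nInf * z) = (-2:ℝ) • z - nInf * (nOri * z) := by
  intro z
  have := gswap ((0,1,0) : V5) ((0,0,1) : V5) (-1) (by rw [B5_apply]; simp) (by rw [B5_apply]; simp) z
  rw [nOri, nInf]
  convert this using 2
  norm_num

lemma swap_on' : nOri * nInf = (-2:ℝ) • (1:Cl) - nInf * nOri := by
  simpa using swap_on 1

lemma sq_n : ∀ z : Cl, nInf * (nInf * z) = 0 := by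
  intro z
  have := gsq ((0,1,0) : V5) 0 (by rw [B5_apply]; simp) z
  simpa [nInf] using this

lemma sq_n' : nInf * nInf = 0 := by simpa using sq_n 1

lemma sq_o : ∀ z : Cl, nOri * (nOri * z) = 0 := by
  intro z
  have := gsq ((0,0,1) : V5) 0 (by rw [B5_apply]; simp) z
  simpa [nOri] using this

lemma sq_o' : nOri * nOri = 0 := by simpa using sq_o 1

lemma ev_add (p q : E3) : ev (p + q) = ev p + ev q := by
  rw [ev, ev, ev, ← map_add]; congr 1; ext <;> simp

lemma ev_sub (p q : E3) : ev (p - q) = ev p - ev q := by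
  rw [ev, ev, ev, ← map_sub]; congr 1; ext <;> simp

lemma ev_smul (r : ℝ) (p : E3) : ev (r • p) = r • ev p := by
  rw [ev, ev, ← map_smul]; congr 1; ext <;> simp

lemma ev_zero : ev 0 = 0 := by rw [ev]; convert map_zero ι5 <;> rfl

lemma cpt_eq (p : E3) : cpt p = ev p + (⟪p,p⟫/2) • nInf + nOri := by
  rw [cpt, ev, nInf, nOri, ← map_smul, ← map_add, ← map_add]
  congr 1; ext <;> simp

lemma lemD (u v : E3) : ev u * w2 (ev u) (ev v) = ev (⟪u,u⟫ • v - ⟪u,v⟫ • u) := by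
  rw [ev_sub, ev_smul, ev_smul, w2]
  simp only [mul_add, add_mul, mul_sub, sub_mul, mul_assoc, smul_mul_assoc, mul_smul_comm,
    mul_one, one_mul, mul_zero, zero_mul, mul_neg, neg_mul,
    swap_ee u v, swap_ee' u v, sq_e u, sq_e' u]
  module

end Aux2
section Aux3

lemma lemV (p₁ p₂ : E3) : w3 (cpt p₁) (cpt p₂) nInf =
    ev p₁ * (ev p₂ * nInf) - ⟪p₁,p₂⟫ • nInf + ev p₂ - ev p₁
      + ev p₂ * (nInf * nOri) - ev p₁ * (nInf * nOri) := by
  rw [cpt_eq, cpt_eq, w3]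
  simp only [mul_add, add_mul, mul_sub, sub_mul, mul_assoc, smul_mul_assoc, mul_smul_comm,
    mul_one, one_mul, mul_zero, zero_mul, mul_neg, neg_mul, smul_zero,
    swap_ee p₁ p₂, swap_ee' p₁ p₂, sq_e p₁, sq_e' p₁, sq_e p₂, sq_e' p₂,
    swap_ne p₁, swap_ne' p₁, swap_ne p₂, swap_ne' p₂,
    swap_oe p₁, swap_oe' p₁, swap_oe p₂, swap_oe' p₂,
    swap_on, swap_on', sq_n, sq_n', sq_o, sq_o']
  module

lemma lemW (p₁ p₂ x : E3) : w2 (w3 (cpt p₁) (cpt p₂) nInf) (cpt x) =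
    (⟪p₁,x⟫ - ⟪p₂,x⟫ - ⟪p₁,p₂⟫) • (1:Cl)
    + ev p₁ * ev p₂ - ev p₁ * ev x + ev p₂ * ev x
    + (⟪p₁,x⟫ - ⟪p₂,x⟫ - ⟪p₁,p₂⟫) • (nInf * nOri)
    + ev p₁ * (ev p₂ * (nInf * nOri)) - ev p₁ * (ev x * (nInf * nOri))
    + ev p₂ * (ev x * (nInf * nOri))
    + ⟪p₂,x⟫ • (ev p₁ * nInf) - ⟪p₁,x⟫ • (ev p₂ * nInf) + ⟪p₁,p₂⟫ • (ev x * nInf)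
    - ev p₁ * (ev p₂ * (ev x * nInf)) := by
  rw [lemV, w2, cpt_eq x]
  simp only [mul_add, add_mul, mul_sub, sub_mul, mul_assoc, smul_mul_assoc, mul_smul_comm,
    mul_one, one_mul, mul_zero, zero_mul, mul_neg, neg_mul, smul_zero,
    swap_ee p₁ p₂, swap_ee' p₁ p₂, swap_ee p₁ x, swap_ee' p₁ x, swap_ee p₂ x, swap_ee' p₂ x,
    sq_e p₁, sq_e' p₁, sq_e p₂, sq_e' p₂, sq_e x, sq_e' x,
    swap_ne p₁, swap_ne' p₁, swap_ne p₂, swap_ne' p₂, swap_ne x, swap_ne' x,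
    swap_oe p₁, swap_oe' p₁, swap_oe p₂, swap_oe' p₂, swap_oe x, swap_oe' x,
    swap_on, swap_on', sq_n, sq_n', sq_o, sq_o']
  module

lemma lemC (p₁ p₂ x : E3) : w2 (ev (p₂-p₁)) (ev (x-p₁)) =
    (⟪p₁,x⟫ - ⟪p₂,x⟫ - ⟪p₁,p₂⟫) • (1:Cl)
    + ev p₁ * ev p₂ - ev p₁ * ev x + ev p₂ * ev x := by
  rw [ev_sub, ev_sub, w2]
  simp only [mul_add, add_mul, mul_sub, sub_mul, mul_assoc, smul_mul_assoc, mul_smul_comm,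
    mul_one, one_mul, mul_zero, zero_mul, mul_neg, neg_mul, smul_zero,
    swap_ee p₁ p₂, swap_ee' p₁ p₂, swap_ee p₁ x, swap_ee' p₁ x, swap_ee p₂ x, swap_ee' p₂ x,
    sq_e p₁, sq_e' p₁, sq_e p₂, sq_e' p₂, sq_e x, sq_e' x]
  module

lemma lemProd (p₁ p₂ : E3) (α : ℝ) :
    (w2 (ev p₁) (ev p₂) + algebraMap ℝ Cl α) * ev (p₂ - p₁)
      = ev ((⟪p₂,p₂⟫ - ⟪p₁,p₂⟫ - α) • p₁ + (α + ⟪p₁,p₁⟫ - ⟪p₁,p₂⟫) • p₂) := by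
  rw [ev_add, ev_smul, ev_smul, ev_sub, w2, Algebra.algebraMap_eq_smul_one]
  simp only [mul_add, add_mul, mul_sub, sub_mul, mul_assoc, smul_mul_assoc, mul_smul_comm,
    mul_one, one_mul, mul_zero, zero_mul, mul_neg, neg_mul, smul_zero,
    swap_ee p₁ p₂, swap_ee' p₁ p₂, sq_e p₁, sq_e' p₁, sq_e p₂, sq_e' p₂]
  module

end Aux3
section Aux4
open CliffordAlgebra

def fO : Module.Dual ℝ V5 := B5 (0,0,1)
def fN : Module.Dual ℝ V5 := B5 (0,1,0)

lemma ct_mul (f : Module.Dual ℝ V5) (v : V5) (b : Cl) :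
    contractLeft f (ι5 v * b) = f v • b - ι5 v * (contractLeft f b) :=
  contractLeft_ι_mul f v b

lemma ct_iota (f : Module.Dual ℝ V5) (v : V5) :
    contractLeft f (ι5 v) = algebraMap ℝ Cl (f v) :=
  contractLeft_ι Q5 f v

-- evaluations of the duals
lemma fO_e (p : E3) : fO ((p,0,0) : V5) = 0 := by rw [fO, B5_apply]; simp
lemma fO_n : fO ((0,1,0) : V5) = -1 := by rw [fO, B5_apply]; simp
lemma fO_o : fO ((0,0,1) : V5) = 0 := by rw [fO, B5_apply]; simp
lemma fN_e (p : E3) : fN ((p,0,0) : V5) = 0 := by rw [fN, B5_apply]; simp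
lemma fN_n : fN ((0,1,0) : V5) = 0 := by rw [fN, B5_apply]; simp
lemma fN_o : fN ((0,0,1) : V5) = -1 := by rw [fN, B5_apply]; simp

-- contraction rules on atoms
lemma ctO_e (p : E3) (z : Cl) : contractLeft fO (ev p * z) = -(ev p * contractLeft fO z) := by
  rw [ev, ct_mul, fO_e]; simp
lemma ctO_n (z : Cl) : contractLeft fO (nInf * z) = -z - nInf * contractLeft fO z := by
  rw [nInf, ct_mul, fO_n]; simp
lemma ctO_o (z : Cl) : contractLeft fO (nOri * z) = -(nOri * contractLeft fO z) := by
  rw [nOri, ct_mul, fO_o]; simp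
lemma ctN_e (p : E3) (z : Cl) : contractLeft fN (ev p * z) = -(ev p * contractLeft fN z) := by
  rw [ev, ct_mul, fN_e]; simp
lemma ctN_n (z : Cl) : contractLeft fN (nInf * z) = -(nInf * contractLeft fN z) := by
  rw [nInf, ct_mul, fN_n]; simp
lemma ctN_o (z : Cl) : contractLeft fN (nOri * z) = -z - nOri * contractLeft fN z := by
  rw [nOri, ct_mul, fN_o]; simp
lemma ctO_e' (p : E3) : contractLeft fO (ev p) = 0 := by rw [ev, ct_iota, fO_e, map_zero]
lemma ctO_n' : contractLeft fO nInf = -1 := by rw [nInf, ct_iota, fO_n]; simp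
lemma ctO_o' : contractLeft fO nOri = 0 := by rw [nOri, ct_iota, fO_o, map_zero]
lemma ctN_e' (p : E3) : contractLeft fN (ev p) = 0 := by rw [ev, ct_iota, fN_e, map_zero]
lemma ctN_n' : contractLeft fN nInf = 0 := by rw [nInf, ct_iota, fN_n, map_zero]
lemma ctN_o' : contractLeft fN nOri = -1 := by rw [nOri, ct_iota, fN_o]; simp

lemma lemK (p₁ p₂ x : E3) :
    contractLeft fN (contractLeft fO (
      (⟪p₁,x⟫ - ⟪p₂,x⟫ - ⟪p₁,p₂⟫) • (1:Cl)
      + ev p₁ * ev p₂ - ev p₁ * ev x + ev p₂ * ev x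
      + (⟪p₁,x⟫ - ⟪p₂,x⟫ - ⟪p₁,p₂⟫) • (nInf * nOri)
      + ev p₁ * (ev p₂ * (nInf * nOri)) - ev p₁ * (ev x * (nInf * nOri))
      + ev p₂ * (ev x * (nInf * nOri))
      + ⟪p₂,x⟫ • (ev p₁ * nInf) - ⟪p₁,x⟫ • (ev p₂ * nInf) + ⟪p₁,p₂⟫ • (ev x * nInf)
      - ev p₁ * (ev p₂ * (ev x * nInf)))) = w2 (ev (p₂-p₁)) (ev (x-p₁)) := by
  rw [lemC]
  simp only [map_add, map_sub, map_smul, map_neg, map_zero, contractLeft_one,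
    ctO_e, ctO_n, ctO_o, ctO_e', ctO_n', ctO_o',
    ctN_e, ctN_n, ctN_o, ctN_e', ctN_n', ctN_o',
    mul_neg, neg_mul, mul_zero, zero_mul, mul_sub, sub_mul, mul_add, add_mul, mul_one, one_mul,
    smul_zero, neg_zero, sub_zero, zero_sub, add_zero, zero_add, neg_neg]

end Aux4
section Aux5
open CliffordAlgebra

lemma algebraMap_Cl_injective : Function.Injective (algebraMap ℝ Cl) := by
  haveI : Invertible (2:ℝ) := invertibleOfNonzero two_ne_zero
  exact RingHom.injective _

lemma ev_inj {u v : E3} (h : ev u = ev v) : u = v := by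
  apply ext_inner_left ℝ
  intro w
  have h2 := congrArg (contractLeft (Q := Q5) (B5 ((w,0,0) : V5))) h
  rw [ev, ev, ct_iota, ct_iota, B_ee, B_ee] at h2
  exact algebraMap_Cl_injective h2

lemma lemZ (p₁ p₂ : E3) (t : ℝ) :
    w2 (w3 (cpt p₁) (cpt p₂) nInf) (cpt (p₁ + t • (p₂ - p₁))) = 0 := by
  rw [lemW]
  simp only [inner_add_right, inner_sub_right, real_inner_smul_right, ev_add, ev_smul, ev_sub,
    real_inner_comm p₂ p₁]
  simp only [mul_add, add_mul, mul_sub, sub_mul, mul_assoc, smul_mul_assoc, mul_smul_comm,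
    mul_one, one_mul, mul_zero, zero_mul, mul_neg, neg_mul, smul_zero, smul_add, smul_sub,
    swap_ee p₁ p₂, swap_ee' p₁ p₂, sq_e p₁, sq_e' p₁, sq_e p₂, sq_e' p₂,
    swap_ne p₁, swap_ne' p₁, swap_ne p₂, swap_ne' p₂,
    swap_oe p₁, swap_oe' p₁, swap_oe p₂, swap_oe' p₂,
    swap_on, swap_on', sq_n, sq_n', sq_o, sq_o', real_inner_comm p₁ p₂]
  module

lemma lemF (p₁ p₂ : E3) (hne : ⟪p₂ - p₁, p₂ - p₁⟫ ≠ 0) (α : ℝ) :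
    (w2 (ev p₁) (ev p₂) + algebraMap ℝ Cl α) * ((⟪p₂ - p₁, p₂ - p₁⟫)⁻¹ • ev (p₂ - p₁))
      = ev (p₁ + ((α + ⟪p₁,p₁⟫ - ⟪p₁,p₂⟫) / ⟪p₂ - p₁, p₂ - p₁⟫) • (p₂ - p₁)) := by
  rw [mul_smul_comm, lemProd, ← ev_smul]
  congr 1
  have key : ∀ (c₁ c₂ e : ℝ), e ≠ 0 → c₁ + c₂ = e → ∀ u v : E3,
      e⁻¹ • (c₁ • u + c₂ • v) = u + (c₂/e) • (v - u) := by
    intro c₁ c₂ e hee hsum u v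
    match_scalars
    · field_simp
      linear_combination hsum
    · field_simp
  have he : ⟪p₂ - p₁, p₂ - p₁⟫ = ⟪p₂,p₂⟫ - 2*⟪p₁,p₂⟫ + ⟪p₁,p₁⟫ := by
    simp only [inner_sub_left, inner_sub_right, real_inner_comm p₁ p₂]
    ring
  exact key _ _ _ hne (by rw [he]; ring) p₁ p₂

end Aux5
/-- parametric solution of the line equation:
x = (m + α)d⁻¹ parametrizes exactly the line through p₁ and p₂, which is
exactly the solution set of V_line ∧ X = 0 for conformal points X. -/
theorem line_parametrization (p₁ p₂ : E3) (h : p₁ ≠ p₂) (x : E3) :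
    ((∃ α : ℝ, ev x =
        (w2 (ev p₁) (ev p₂) + algebraMap ℝ Cl α) *
          ((⟪p₂ - p₁, p₂ - p₁⟫)⁻¹ • ev (p₂ - p₁))) ↔
      (∃ t : ℝ, x = p₁ + t • (p₂ - p₁))) ∧
    ((∃ t : ℝ, x = p₁ + t • (p₂ - p₁)) ↔
      w2 (w3 (cpt p₁) (cpt p₂) nInf) (cpt x) = 0) := by
  have hd : p₂ - p₁ ≠ 0 := sub_ne_zero_of_ne (Ne.symm h)
  have hne : ⟪p₂ - p₁, p₂ - p₁⟫ ≠ 0 := fun hc => hd (inner_self_eq_zero.mp hc)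
  constructor
  · constructor
    · rintro ⟨α, hα⟩
      rw [lemF p₁ p₂ hne α] at hα
      exact ⟨_, ev_inj hα⟩
    · rintro ⟨t, ht⟩
      refine ⟨t * ⟪p₂ - p₁, p₂ - p₁⟫ - ⟪p₁,p₁⟫ + ⟪p₁,p₂⟫, ?_⟩
      rw [lemF p₁ p₂ hne, ht,
        show t * ⟪p₂ - p₁, p₂ - p₁⟫ - ⟪p₁,p₁⟫ + ⟪p₁,p₂⟫ + ⟪p₁,p₁⟫ - ⟪p₁,p₂⟫
          = t * ⟪p₂ - p₁, p₂ - p₁⟫ from by ring,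
        mul_div_cancel_right₀ t hne]
  · constructor
    · rintro ⟨t, ht⟩
      rw [ht]
      exact lemZ p₁ p₂ t
    · intro hW0
      have hNF : ((⟪p₁,x⟫ - ⟪p₂,x⟫ - ⟪p₁,p₂⟫) • (1:Cl)
          + ev p₁ * ev p₂ - ev p₁ * ev x + ev p₂ * ev x
          + (⟪p₁,x⟫ - ⟪p₂,x⟫ - ⟪p₁,p₂⟫) • (nInf * nOri)
          + ev p₁ * (ev p₂ * (nInf * nOri)) - ev p₁ * (ev x * (nInf * nOri))
          + ev p₂ * (ev x * (nInf * nOri))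
          + ⟪p₂,x⟫ • (ev p₁ * nInf) - ⟪p₁,x⟫ • (ev p₂ * nInf) + ⟪p₁,p₂⟫ • (ev x * nInf)
          - ev p₁ * (ev p₂ * (ev x * nInf))) = 0 := by
        rw [← lemW]; exact hW0
      have h2 : w2 (ev (p₂ - p₁)) (ev (x - p₁)) = 0 := by
        rw [← lemK p₁ p₂ x, hNF, map_zero, map_zero]
      have h3 : ev (⟪p₂-p₁,p₂-p₁⟫ • (x-p₁) - ⟪p₂-p₁,x-p₁⟫ • (p₂-p₁)) = 0 := by
        rw [← lemD (p₂-p₁) (x-p₁), h2, mul_zero]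
      have h4 := ev_inj (h3.trans ev_zero.symm)
      have h5 : ⟪p₂-p₁,p₂-p₁⟫ • (x-p₁) = ⟪p₂-p₁,x-p₁⟫ • (p₂-p₁) := sub_eq_zero.mp h4
      refine ⟨⟪p₂-p₁,x-p₁⟫ / ⟪p₂-p₁,p₂-p₁⟫, ?_⟩
      have h6 : x - p₁ = (⟪p₂-p₁,x-p₁⟫ / ⟪p₂-p₁,p₂-p₁⟫) • (p₂-p₁) := by
        rw [div_eq_inv_mul, ← smul_smul, ← h5, smul_smul, inv_mul_cancel₀ hne, one_smul]
      rw [← h6]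
      abel
end
end

section
/- If Pₖ = c + r rₖ + (1/2)(c² + r² + 2r c·rₖ)n + n̄ for four unit vectors rₖ (k = 1,…,4) on a sphere of center c and radius r, then P₁∧P₂∧P₃∧P₄ = (C − (1/2)r²n) i_s N, where i_s = (p₁−p₂)∧(p₂−p₃)∧(p₃−p₄) with pₖ = c + r rₖ, C = c + (1/2)c²n + n̄, and N = n∧n̄. -/
noncomputable section
open scoped RealInnerProductSpace

/-- Outer (wedge) product of four vectors. -/
def w4 (a b c d : Cl) : Cl := (24:ℝ)⁻¹ •
  (a*b*c*d - a*b*d*c - a*c*b*d + a*c*d*b + a*d*b*c - a*d*c*b - b*a*c*d + b*a*d*c + b*c*a*d - b*c*d*a - b*d*a*c + b*d*c*a + c*a*b*d - c*a*d*b - c*b*a*d + c*b*d*a + c*d*a*b - c*d*b*a - d*a*b*c + d*a*c*b + d*b*a*c - d*b*c*a - d*c*a*b + d*c*b*a)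


section SphereAux

-- basis vectors
def bE (i : Fin 3) : V5 := (EuclideanSpace.single i 1, 0, 0)
def bN : V5 := (0, 1, 0)
def bO : V5 := (0, 0, 1)

lemma B5_apply_s18 (x y : V5) : B5 x y = ⟪x.1, y.1⟫ - x.2.1 * y.2.2 - x.2.2 * y.2.1 := rfl

lemma B5_bE_bE (i j : Fin 3) : B5 (bE i) (bE j) = if i = j then 1 else 0 := by
  simp [B5_apply_s18, bE, EuclideanSpace.inner_single_left, EuclideanSpace.single_apply, eq_comm]

lemma B5_bE_bN (i : Fin 3) : B5 (bE i) bN = 0 := by simp [B5_apply_s18, bE, bN]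
lemma B5_bE_bO (i : Fin 3) : B5 (bE i) bO = 0 := by simp [B5_apply_s18, bE, bO]
lemma B5_bN_bN : B5 bN bN = 0 := by simp [B5_apply_s18, bN]
lemma B5_bO_bO : B5 bO bO = 0 := by simp [B5_apply_s18, bO]
lemma B5_bN_bO : B5 bN bO = -1 := by simp [B5_apply_s18, bN, bO]

-- decomposition
lemma V5_decomp (p : E3) (a b : ℝ) :
    ((p, a, b) : V5) = p 0 • bE 0 + p 1 • bE 1 + p 2 • bE 2 + a • bN + b • bO := by
  simp only [bE, bN, bO, Prod.smul_mk, Prod.mk_add_mk, smul_zero, smul_eq_mul, mul_one, mul_zero]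
  norm_num
  ext i
  fin_cases i <;> simp [EuclideanSpace.single_apply]

def g0 : Cl := ι5 (bE 0)
def g1 : Cl := ι5 (bE 1)
def g2 : Cl := ι5 (bE 2)
def gn : Cl := ι5 bN
def go : Cl := ι5 bO

lemma mulswap (x y : V5) : ι5 y * ι5 x = algebraMap ℝ Cl (B5 x y + B5 y x) - ι5 x * ι5 y := by
  have h := CliffordAlgebra.ι_mul_ι_add_swap (Q := Q5) x y
  have h2 : QuadraticMap.polar (⇑Q5) x y = B5 x y + B5 y x :=
    LinearMap.BilinMap.polar_toQuadraticMap x y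
  rw [h2] at h
  rw [← h]; simp only [ι5]; abel

lemma mulsq (x : V5) : ι5 x * ι5 x = algebraMap ℝ Cl (B5 x x) := CliffordAlgebra.ι_sq_scalar Q5 x

-- squares
lemma g0g0 : g0 * g0 = 1 := by rw [g0, mulsq, B5_bE_bE]; simp
lemma g1g1 : g1 * g1 = 1 := by rw [g1, mulsq, B5_bE_bE]; simp
lemma g2g2 : g2 * g2 = 1 := by rw [g2, mulsq, B5_bE_bE]; simp
lemma gngn : gn * gn = 0 := by rw [gn, mulsq, B5_bN_bN]; simp
lemma gogo : go * go = 0 := by rw [go, mulsq, B5_bO_bO]; simp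
lemma g0g0' (x : Cl) : g0 * (g0 * x) = x := by rw [← mul_assoc, g0g0, one_mul]
lemma g1g1' (x : Cl) : g1 * (g1 * x) = x := by rw [← mul_assoc, g1g1, one_mul]
lemma g2g2' (x : Cl) : g2 * (g2 * x) = x := by rw [← mul_assoc, g2g2, one_mul]
lemma gngn' (x : Cl) : gn * (gn * x) = 0 := by rw [← mul_assoc, gngn, zero_mul]
lemma gogo' (x : Cl) : go * (go * x) = 0 := by rw [← mul_assoc, gogo, zero_mul]

-- swaps (orthogonal pairs)
lemma g1g0 : g1 * g0 = -(g0 * g1) := by rw [g0, g1, mulswap]; rw [B5_bE_bE, B5_bE_bE]; simp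
lemma g2g0 : g2 * g0 = -(g0 * g2) := by rw [g0, g2, mulswap]; rw [B5_bE_bE, B5_bE_bE]; simp
lemma g2g1 : g2 * g1 = -(g1 * g2) := by rw [g1, g2, mulswap]; rw [B5_bE_bE, B5_bE_bE]; simp
lemma gng0 : gn * g0 = -(g0 * gn) := by rw [g0, gn, mulswap, B5_bE_bN, B5_apply_s18]; simp [bE, bN]
lemma gng1 : gn * g1 = -(g1 * gn) := by rw [g1, gn, mulswap, B5_bE_bN, B5_apply_s18]; simp [bE, bN]
lemma gng2 : gn * g2 = -(g2 * gn) := by rw [g2, gn, mulswap, B5_bE_bN, B5_apply_s18]; simp [bE, bN]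
lemma gog0 : go * g0 = -(g0 * go) := by rw [g0, go, mulswap, B5_bE_bO, B5_apply_s18]; simp [bE, bO]
lemma gog1 : go * g1 = -(g1 * go) := by rw [g1, go, mulswap, B5_bE_bO, B5_apply_s18]; simp [bE, bO]
lemma gog2 : go * g2 = -(g2 * go) := by rw [g2, go, mulswap, B5_bE_bO, B5_apply_s18]; simp [bE, bO]
lemma B5_bO_bN : B5 bO bN = -1 := by simp [B5_apply_s18, bN, bO]

lemma gogn : go * gn = (-2 : ℝ) • 1 - gn * go := by
  rw [gn, go, mulswap, B5_bN_bO, B5_bO_bN]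
  rw [show ((-1 : ℝ) + -1 : ℝ) = -2 by norm_num,
    show (algebraMap ℝ Cl) (-2) = ((-2:ℝ) • 1 : Cl) by simp [Algebra.algebraMap_eq_smul_one]]

lemma g1g0' (x : Cl) : g1 * (g0 * x) = -(g0 * (g1 * x)) := by rw [← mul_assoc, g1g0]; simp [mul_assoc]
lemma g2g0' (x : Cl) : g2 * (g0 * x) = -(g0 * (g2 * x)) := by rw [← mul_assoc, g2g0]; simp [mul_assoc]
lemma g2g1' (x : Cl) : g2 * (g1 * x) = -(g1 * (g2 * x)) := by rw [← mul_assoc, g2g1]; simp [mul_assoc]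
lemma gng0' (x : Cl) : gn * (g0 * x) = -(g0 * (gn * x)) := by rw [← mul_assoc, gng0]; simp [mul_assoc]
lemma gng1' (x : Cl) : gn * (g1 * x) = -(g1 * (gn * x)) := by rw [← mul_assoc, gng1]; simp [mul_assoc]
lemma gng2' (x : Cl) : gn * (g2 * x) = -(g2 * (gn * x)) := by rw [← mul_assoc, gng2]; simp [mul_assoc]
lemma gog0' (x : Cl) : go * (g0 * x) = -(g0 * (go * x)) := by rw [← mul_assoc, gog0]; simp [mul_assoc]
lemma gog1' (x : Cl) : go * (g1 * x) = -(g1 * (go * x)) := by rw [← mul_assoc, gog1]; simp [mul_assoc]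
lemma gog2' (x : Cl) : go * (g2 * x) = -(g2 * (go * x)) := by rw [← mul_assoc, gog2]; simp [mul_assoc]
lemma gogn' (x : Cl) : go * (gn * x) = (-2 : ℝ) • x - gn * (go * x) := by
  rw [← mul_assoc, gogn, sub_mul, smul_mul_assoc, one_mul, mul_assoc]

lemma w4_swap12 (a b c d : Cl) : w4 b a c d = -w4 a b c d := by
  unfold w4; module

lemma w4_swap23 (a b c d : Cl) : w4 a c b d = -w4 a b c d := by
  unfold w4; module

lemma w4_swap34 (a b c d : Cl) : w4 a b d c = -w4 a b c d := by
  unfold w4; module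

lemma w4_alt12 (x1 x3 x4 : Cl) : w4 x1 x1 x3 x4 = 0 := by
  unfold w4; module

lemma w4_alt13 (x1 x2 x4 : Cl) : w4 x1 x2 x1 x4 = 0 := by
  unfold w4; module

lemma w4_alt14 (x1 x2 x3 : Cl) : w4 x1 x2 x3 x1 = 0 := by
  unfold w4; module

lemma w4_alt23 (x1 x2 x4 : Cl) : w4 x1 x2 x2 x4 = 0 := by
  unfold w4; module

lemma w4_alt24 (x1 x2 x3 : Cl) : w4 x1 x2 x3 x2 = 0 := by
  unfold w4; module

lemma w4_alt34 (x1 x2 x3 : Cl) : w4 x1 x2 x3 x3 = 0 := by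
  unfold w4; module

lemma w4_add1 (a' a'' b c d : Cl) : w4 (a' + a'') b c d = w4 a' b c d + w4 a'' b c d := by
  unfold w4; simp only [add_mul, mul_add]; module

lemma w4_smul1 (s : ℝ) (a' b c d : Cl) : w4 (s • a') b c d = s • w4 a' b c d := by
  unfold w4; simp only [smul_mul_assoc, mul_smul_comm]; module

lemma w4_add2 (a' a'' a c d : Cl) : w4 a (a' + a'') c d = w4 a a' c d + w4 a a'' c d := by
  unfold w4; simp only [add_mul, mul_add]; module

lemma w4_smul2 (s : ℝ) (a' a c d : Cl) : w4 a (s • a') c d = s • w4 a a' c d := by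
  unfold w4; simp only [smul_mul_assoc, mul_smul_comm]; module

lemma w4_add3 (a' a'' a b d : Cl) : w4 a b (a' + a'') d = w4 a b a' d + w4 a b a'' d := by
  unfold w4; simp only [add_mul, mul_add]; module

lemma w4_smul3 (s : ℝ) (a' a b d : Cl) : w4 a b (s • a') d = s • w4 a b a' d := by
  unfold w4; simp only [smul_mul_assoc, mul_smul_comm]; module

lemma w4_add4 (a' a'' a b c : Cl) : w4 a b c (a' + a'') = w4 a b c a' + w4 a b c a'' := by
  unfold w4; simp only [add_mul, mul_add]; module

lemma w4_smul4 (s : ℝ) (a' a b c : Cl) : w4 a b c (s • a') = s • w4 a b c a' := by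
  unfold w4; simp only [smul_mul_assoc, mul_smul_comm]; module

lemma w3_swap12 (a b c : Cl) : w3 b a c = -w3 a b c := by
  unfold w3; module

lemma w3_swap23 (a b c : Cl) : w3 a c b = -w3 a b c := by
  unfold w3; module

lemma w3_alt12 (x1 x3 : Cl) : w3 x1 x1 x3 = 0 := by
  unfold w3; module

lemma w3_alt13 (x1 x2 : Cl) : w3 x1 x2 x1 = 0 := by
  unfold w3; module

lemma w3_alt23 (x1 x2 : Cl) : w3 x1 x2 x2 = 0 := by
  unfold w3; module

lemma w3_add1 (a' a'' b c : Cl) : w3 (a' + a'') b c = w3 a' b c + w3 a'' b c := by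
  unfold w3; simp only [add_mul, mul_add]; module

lemma w3_smul1 (s : ℝ) (a' b c : Cl) : w3 (s • a') b c = s • w3 a' b c := by
  unfold w3; simp only [smul_mul_assoc, mul_smul_comm]; module

lemma w3_add2 (a' a'' a c : Cl) : w3 a (a' + a'') c = w3 a a' c + w3 a a'' c := by
  unfold w3; simp only [add_mul, mul_add]; module

lemma w3_smul2 (s : ℝ) (a' a c : Cl) : w3 a (s • a') c = s • w3 a a' c := by
  unfold w3; simp only [smul_mul_assoc, mul_smul_comm]; module

lemma w3_add3 (a' a'' a b : Cl) : w3 a b (a' + a'') = w3 a b a' + w3 a b a'' := by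
  unfold w3; simp only [add_mul, mul_add]; module

lemma w3_smul3 (s : ℝ) (a' a b : Cl) : w3 a b (s • a') = s • w3 a b a' := by
  unfold w3; simp only [smul_mul_assoc, mul_smul_comm]; module

lemma w4v_0_1_2_n : w4 g0 g1 g2 gn = (1 : ℝ) • (g0 * (g1 * (g2 * (gn)))) := by
  simp only [w4, mul_assoc, g1g0, g2g0, g2g1, gng0, gng1, gng2, gog0, gog1, gog2, gogn,
    g1g0', g2g0', g2g1', gng0', gng1', gng2', gog0', gog1', gog2', gogn',
    g0g0, g1g1, g2g2, gngn, gogo, g0g0', g1g1', g2g2', gngn', gogo',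
    mul_neg, neg_mul, neg_neg, mul_one, one_mul, mul_zero, zero_mul, mul_sub, sub_mul,
    smul_mul_assoc, mul_smul_comm]
  module

lemma w4v_0_1_2_o : w4 g0 g1 g2 go = (1 : ℝ) • (g0 * (g1 * (g2 * (go)))) := by
  simp only [w4, mul_assoc, g1g0, g2g0, g2g1, gng0, gng1, gng2, gog0, gog1, gog2, gogn,
    g1g0', g2g0', g2g1', gng0', gng1', gng2', gog0', gog1', gog2', gogn',
    g0g0, g1g1, g2g2, gngn, gogo, g0g0', g1g1', g2g2', gngn', gogo',
    mul_neg, neg_mul, neg_neg, mul_one, one_mul, mul_zero, zero_mul, mul_sub, sub_mul,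
    smul_mul_assoc, mul_smul_comm]
  module

lemma w4v_0_1_n_o : w4 g0 g1 gn go = (1 : ℝ) • (g0 * (g1)) + (1 : ℝ) • (g0 * (g1 * (gn * (go)))) := by
  simp only [w4, mul_assoc, g1g0, g2g0, g2g1, gng0, gng1, gng2, gog0, gog1, gog2, gogn,
    g1g0', g2g0', g2g1', gng0', gng1', gng2', gog0', gog1', gog2', gogn',
    g0g0, g1g1, g2g2, gngn, gogo, g0g0', g1g1', g2g2', gngn', gogo',
    mul_neg, neg_mul, neg_neg, mul_one, one_mul, mul_zero, zero_mul, mul_sub, sub_mul,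
    smul_mul_assoc, mul_smul_comm]
  module

lemma w4v_0_2_n_o : w4 g0 g2 gn go = (1 : ℝ) • (g0 * (g2)) + (1 : ℝ) • (g0 * (g2 * (gn * (go)))) := by
  simp only [w4, mul_assoc, g1g0, g2g0, g2g1, gng0, gng1, gng2, gog0, gog1, gog2, gogn,
    g1g0', g2g0', g2g1', gng0', gng1', gng2', gog0', gog1', gog2', gogn',
    g0g0, g1g1, g2g2, gngn, gogo, g0g0', g1g1', g2g2', gngn', gogo',
    mul_neg, neg_mul, neg_neg, mul_one, one_mul, mul_zero, zero_mul, mul_sub, sub_mul,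
    smul_mul_assoc, mul_smul_comm]
  module

lemma w4v_1_2_n_o : w4 g1 g2 gn go = (1 : ℝ) • (g1 * (g2)) + (1 : ℝ) • (g1 * (g2 * (gn * (go)))) := by
  simp only [w4, mul_assoc, g1g0, g2g0, g2g1, gng0, gng1, gng2, gog0, gog1, gog2, gogn,
    g1g0', g2g0', g2g1', gng0', gng1', gng2', gog0', gog1', gog2', gogn',
    g0g0, g1g1, g2g2, gngn, gogo, g0g0', g1g1', g2g2', gngn', gogo',
    mul_neg, neg_mul, neg_neg, mul_one, one_mul, mul_zero, zero_mul, mul_sub, sub_mul,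
    smul_mul_assoc, mul_smul_comm]
  module

lemma w4v_0_1_n_2 : w4 g0 g1 gn g2 = (-1 : ℝ) • (g0 * (g1 * (g2 * (gn)))) := by
  rw [w4_swap34, w4v_0_1_2_n]; module

lemma w4v_0_2_1_n : w4 g0 g2 g1 gn = (-1 : ℝ) • (g0 * (g1 * (g2 * (gn)))) := by
  rw [w4_swap23, w4v_0_1_2_n]; module

lemma w4v_0_2_n_1 : w4 g0 g2 gn g1 = (1 : ℝ) • (g0 * (g1 * (g2 * (gn)))) := by
  rw [w4_swap34, w4_swap23, w4v_0_1_2_n]; module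

lemma w4v_0_n_1_2 : w4 g0 gn g1 g2 = (1 : ℝ) • (g0 * (g1 * (g2 * (gn)))) := by
  rw [w4_swap23, w4_swap34, w4v_0_1_2_n]; module

lemma w4v_0_n_2_1 : w4 g0 gn g2 g1 = (-1 : ℝ) • (g0 * (g1 * (g2 * (gn)))) := by
  rw [w4_swap23, w4_swap34, w4_swap23, w4v_0_1_2_n]; module

lemma w4v_1_0_2_n : w4 g1 g0 g2 gn = (-1 : ℝ) • (g0 * (g1 * (g2 * (gn)))) := by
  rw [w4_swap12, w4v_0_1_2_n]; module

lemma w4v_1_0_n_2 : w4 g1 g0 gn g2 = (1 : ℝ) • (g0 * (g1 * (g2 * (gn)))) := by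
  rw [w4_swap12, w4_swap34, w4v_0_1_2_n]; module

lemma w4v_1_2_0_n : w4 g1 g2 g0 gn = (1 : ℝ) • (g0 * (g1 * (g2 * (gn)))) := by
  rw [w4_swap23, w4_swap12, w4v_0_1_2_n]; module

lemma w4v_1_2_n_0 : w4 g1 g2 gn g0 = (-1 : ℝ) • (g0 * (g1 * (g2 * (gn)))) := by
  rw [w4_swap34, w4_swap23, w4_swap12, w4v_0_1_2_n]; module

lemma w4v_1_n_0_2 : w4 g1 gn g0 g2 = (-1 : ℝ) • (g0 * (g1 * (g2 * (gn)))) := by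
  rw [w4_swap23, w4_swap12, w4_swap34, w4v_0_1_2_n]; module

lemma w4v_1_n_2_0 : w4 g1 gn g2 g0 = (1 : ℝ) • (g0 * (g1 * (g2 * (gn)))) := by
  rw [w4_swap23, w4_swap34, w4_swap23, w4_swap12, w4v_0_1_2_n]; module

lemma w4v_2_0_1_n : w4 g2 g0 g1 gn = (1 : ℝ) • (g0 * (g1 * (g2 * (gn)))) := by
  rw [w4_swap12, w4_swap23, w4v_0_1_2_n]; module

lemma w4v_2_0_n_1 : w4 g2 g0 gn g1 = (-1 : ℝ) • (g0 * (g1 * (g2 * (gn)))) := by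
  rw [w4_swap12, w4_swap34, w4_swap23, w4v_0_1_2_n]; module

lemma w4v_2_1_0_n : w4 g2 g1 g0 gn = (-1 : ℝ) • (g0 * (g1 * (g2 * (gn)))) := by
  rw [w4_swap12, w4_swap23, w4_swap12, w4v_0_1_2_n]; module

lemma w4v_2_1_n_0 : w4 g2 g1 gn g0 = (1 : ℝ) • (g0 * (g1 * (g2 * (gn)))) := by
  rw [w4_swap12, w4_swap34, w4_swap23, w4_swap12, w4v_0_1_2_n]; module

lemma w4v_2_n_0_1 : w4 g2 gn g0 g1 = (1 : ℝ) • (g0 * (g1 * (g2 * (gn)))) := by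
  rw [w4_swap23, w4_swap12, w4_swap34, w4_swap23, w4v_0_1_2_n]; module

lemma w4v_2_n_1_0 : w4 g2 gn g1 g0 = (-1 : ℝ) • (g0 * (g1 * (g2 * (gn)))) := by
  rw [w4_swap23, w4_swap12, w4_swap34, w4_swap23, w4_swap12, w4v_0_1_2_n]; module

lemma w4v_n_0_1_2 : w4 gn g0 g1 g2 = (-1 : ℝ) • (g0 * (g1 * (g2 * (gn)))) := by
  rw [w4_swap12, w4_swap23, w4_swap34, w4v_0_1_2_n]; module

lemma w4v_n_0_2_1 : w4 gn g0 g2 g1 = (1 : ℝ) • (g0 * (g1 * (g2 * (gn)))) := by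
  rw [w4_swap12, w4_swap23, w4_swap34, w4_swap23, w4v_0_1_2_n]; module

lemma w4v_n_1_0_2 : w4 gn g1 g0 g2 = (1 : ℝ) • (g0 * (g1 * (g2 * (gn)))) := by
  rw [w4_swap12, w4_swap23, w4_swap12, w4_swap34, w4v_0_1_2_n]; module

lemma w4v_n_1_2_0 : w4 gn g1 g2 g0 = (-1 : ℝ) • (g0 * (g1 * (g2 * (gn)))) := by
  rw [w4_swap12, w4_swap23, w4_swap34, w4_swap23, w4_swap12, w4v_0_1_2_n]; module

lemma w4v_n_2_0_1 : w4 gn g2 g0 g1 = (-1 : ℝ) • (g0 * (g1 * (g2 * (gn)))) := by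
  rw [w4_swap12, w4_swap23, w4_swap12, w4_swap34, w4_swap23, w4v_0_1_2_n]; module

lemma w4v_n_2_1_0 : w4 gn g2 g1 g0 = (1 : ℝ) • (g0 * (g1 * (g2 * (gn)))) := by
  rw [w4_swap12, w4_swap23, w4_swap12, w4_swap34, w4_swap23, w4_swap12, w4v_0_1_2_n]; module

lemma w4v_0_1_o_2 : w4 g0 g1 go g2 = (-1 : ℝ) • (g0 * (g1 * (g2 * (go)))) := by
  rw [w4_swap34, w4v_0_1_2_o]; module

lemma w4v_0_2_1_o : w4 g0 g2 g1 go = (-1 : ℝ) • (g0 * (g1 * (g2 * (go)))) := by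
  rw [w4_swap23, w4v_0_1_2_o]; module

lemma w4v_0_2_o_1 : w4 g0 g2 go g1 = (1 : ℝ) • (g0 * (g1 * (g2 * (go)))) := by
  rw [w4_swap34, w4_swap23, w4v_0_1_2_o]; module

lemma w4v_0_o_1_2 : w4 g0 go g1 g2 = (1 : ℝ) • (g0 * (g1 * (g2 * (go)))) := by
  rw [w4_swap23, w4_swap34, w4v_0_1_2_o]; module

lemma w4v_0_o_2_1 : w4 g0 go g2 g1 = (-1 : ℝ) • (g0 * (g1 * (g2 * (go)))) := by
  rw [w4_swap23, w4_swap34, w4_swap23, w4v_0_1_2_o]; module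

lemma w4v_1_0_2_o : w4 g1 g0 g2 go = (-1 : ℝ) • (g0 * (g1 * (g2 * (go)))) := by
  rw [w4_swap12, w4v_0_1_2_o]; module

lemma w4v_1_0_o_2 : w4 g1 g0 go g2 = (1 : ℝ) • (g0 * (g1 * (g2 * (go)))) := by
  rw [w4_swap12, w4_swap34, w4v_0_1_2_o]; module

lemma w4v_1_2_0_o : w4 g1 g2 g0 go = (1 : ℝ) • (g0 * (g1 * (g2 * (go)))) := by
  rw [w4_swap23, w4_swap12, w4v_0_1_2_o]; module

lemma w4v_1_2_o_0 : w4 g1 g2 go g0 = (-1 : ℝ) • (g0 * (g1 * (g2 * (go)))) := by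
  rw [w4_swap34, w4_swap23, w4_swap12, w4v_0_1_2_o]; module

lemma w4v_1_o_0_2 : w4 g1 go g0 g2 = (-1 : ℝ) • (g0 * (g1 * (g2 * (go)))) := by
  rw [w4_swap23, w4_swap12, w4_swap34, w4v_0_1_2_o]; module

lemma w4v_1_o_2_0 : w4 g1 go g2 g0 = (1 : ℝ) • (g0 * (g1 * (g2 * (go)))) := by
  rw [w4_swap23, w4_swap34, w4_swap23, w4_swap12, w4v_0_1_2_o]; module

lemma w4v_2_0_1_o : w4 g2 g0 g1 go = (1 : ℝ) • (g0 * (g1 * (g2 * (go)))) := by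
  rw [w4_swap12, w4_swap23, w4v_0_1_2_o]; module

lemma w4v_2_0_o_1 : w4 g2 g0 go g1 = (-1 : ℝ) • (g0 * (g1 * (g2 * (go)))) := by
  rw [w4_swap12, w4_swap34, w4_swap23, w4v_0_1_2_o]; module

lemma w4v_2_1_0_o : w4 g2 g1 g0 go = (-1 : ℝ) • (g0 * (g1 * (g2 * (go)))) := by
  rw [w4_swap12, w4_swap23, w4_swap12, w4v_0_1_2_o]; module

lemma w4v_2_1_o_0 : w4 g2 g1 go g0 = (1 : ℝ) • (g0 * (g1 * (g2 * (go)))) := by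
  rw [w4_swap12, w4_swap34, w4_swap23, w4_swap12, w4v_0_1_2_o]; module

lemma w4v_2_o_0_1 : w4 g2 go g0 g1 = (1 : ℝ) • (g0 * (g1 * (g2 * (go)))) := by
  rw [w4_swap23, w4_swap12, w4_swap34, w4_swap23, w4v_0_1_2_o]; module

lemma w4v_2_o_1_0 : w4 g2 go g1 g0 = (-1 : ℝ) • (g0 * (g1 * (g2 * (go)))) := by
  rw [w4_swap23, w4_swap12, w4_swap34, w4_swap23, w4_swap12, w4v_0_1_2_o]; module

lemma w4v_o_0_1_2 : w4 go g0 g1 g2 = (-1 : ℝ) • (g0 * (g1 * (g2 * (go)))) := by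
  rw [w4_swap12, w4_swap23, w4_swap34, w4v_0_1_2_o]; module

lemma w4v_o_0_2_1 : w4 go g0 g2 g1 = (1 : ℝ) • (g0 * (g1 * (g2 * (go)))) := by
  rw [w4_swap12, w4_swap23, w4_swap34, w4_swap23, w4v_0_1_2_o]; module

lemma w4v_o_1_0_2 : w4 go g1 g0 g2 = (1 : ℝ) • (g0 * (g1 * (g2 * (go)))) := by
  rw [w4_swap12, w4_swap23, w4_swap12, w4_swap34, w4v_0_1_2_o]; module

lemma w4v_o_1_2_0 : w4 go g1 g2 g0 = (-1 : ℝ) • (g0 * (g1 * (g2 * (go)))) := by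
  rw [w4_swap12, w4_swap23, w4_swap34, w4_swap23, w4_swap12, w4v_0_1_2_o]; module

lemma w4v_o_2_0_1 : w4 go g2 g0 g1 = (-1 : ℝ) • (g0 * (g1 * (g2 * (go)))) := by
  rw [w4_swap12, w4_swap23, w4_swap12, w4_swap34, w4_swap23, w4v_0_1_2_o]; module

lemma w4v_o_2_1_0 : w4 go g2 g1 g0 = (1 : ℝ) • (g0 * (g1 * (g2 * (go)))) := by
  rw [w4_swap12, w4_swap23, w4_swap12, w4_swap34, w4_swap23, w4_swap12, w4v_0_1_2_o]; module

lemma w4v_0_1_o_n : w4 g0 g1 go gn = (-1 : ℝ) • (g0 * (g1)) + (-1 : ℝ) • (g0 * (g1 * (gn * (go)))) := by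
  rw [w4_swap34, w4v_0_1_n_o]; module

lemma w4v_0_n_1_o : w4 g0 gn g1 go = (-1 : ℝ) • (g0 * (g1)) + (-1 : ℝ) • (g0 * (g1 * (gn * (go)))) := by
  rw [w4_swap23, w4v_0_1_n_o]; module

lemma w4v_0_n_o_1 : w4 g0 gn go g1 = (1 : ℝ) • (g0 * (g1)) + (1 : ℝ) • (g0 * (g1 * (gn * (go)))) := by
  rw [w4_swap34, w4_swap23, w4v_0_1_n_o]; module

lemma w4v_0_o_1_n : w4 g0 go g1 gn = (1 : ℝ) • (g0 * (g1)) + (1 : ℝ) • (g0 * (g1 * (gn * (go)))) := by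
  rw [w4_swap23, w4_swap34, w4v_0_1_n_o]; module

lemma w4v_0_o_n_1 : w4 g0 go gn g1 = (-1 : ℝ) • (g0 * (g1)) + (-1 : ℝ) • (g0 * (g1 * (gn * (go)))) := by
  rw [w4_swap23, w4_swap34, w4_swap23, w4v_0_1_n_o]; module

lemma w4v_1_0_n_o : w4 g1 g0 gn go = (-1 : ℝ) • (g0 * (g1)) + (-1 : ℝ) • (g0 * (g1 * (gn * (go)))) := by
  rw [w4_swap12, w4v_0_1_n_o]; module

lemma w4v_1_0_o_n : w4 g1 g0 go gn = (1 : ℝ) • (g0 * (g1)) + (1 : ℝ) • (g0 * (g1 * (gn * (go)))) := by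
  rw [w4_swap12, w4_swap34, w4v_0_1_n_o]; module

lemma w4v_1_n_0_o : w4 g1 gn g0 go = (1 : ℝ) • (g0 * (g1)) + (1 : ℝ) • (g0 * (g1 * (gn * (go)))) := by
  rw [w4_swap23, w4_swap12, w4v_0_1_n_o]; module

lemma w4v_1_n_o_0 : w4 g1 gn go g0 = (-1 : ℝ) • (g0 * (g1)) + (-1 : ℝ) • (g0 * (g1 * (gn * (go)))) := by
  rw [w4_swap34, w4_swap23, w4_swap12, w4v_0_1_n_o]; module

lemma w4v_1_o_0_n : w4 g1 go g0 gn = (-1 : ℝ) • (g0 * (g1)) + (-1 : ℝ) • (g0 * (g1 * (gn * (go)))) := by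
  rw [w4_swap23, w4_swap12, w4_swap34, w4v_0_1_n_o]; module

lemma w4v_1_o_n_0 : w4 g1 go gn g0 = (1 : ℝ) • (g0 * (g1)) + (1 : ℝ) • (g0 * (g1 * (gn * (go)))) := by
  rw [w4_swap23, w4_swap34, w4_swap23, w4_swap12, w4v_0_1_n_o]; module

lemma w4v_n_0_1_o : w4 gn g0 g1 go = (1 : ℝ) • (g0 * (g1)) + (1 : ℝ) • (g0 * (g1 * (gn * (go)))) := by
  rw [w4_swap12, w4_swap23, w4v_0_1_n_o]; module

lemma w4v_n_0_o_1 : w4 gn g0 go g1 = (-1 : ℝ) • (g0 * (g1)) + (-1 : ℝ) • (g0 * (g1 * (gn * (go)))) := by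
  rw [w4_swap12, w4_swap34, w4_swap23, w4v_0_1_n_o]; module

lemma w4v_n_1_0_o : w4 gn g1 g0 go = (-1 : ℝ) • (g0 * (g1)) + (-1 : ℝ) • (g0 * (g1 * (gn * (go)))) := by
  rw [w4_swap12, w4_swap23, w4_swap12, w4v_0_1_n_o]; module

lemma w4v_n_1_o_0 : w4 gn g1 go g0 = (1 : ℝ) • (g0 * (g1)) + (1 : ℝ) • (g0 * (g1 * (gn * (go)))) := by
  rw [w4_swap12, w4_swap34, w4_swap23, w4_swap12, w4v_0_1_n_o]; module

lemma w4v_n_o_0_1 : w4 gn go g0 g1 = (1 : ℝ) • (g0 * (g1)) + (1 : ℝ) • (g0 * (g1 * (gn * (go)))) := by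
  rw [w4_swap23, w4_swap12, w4_swap34, w4_swap23, w4v_0_1_n_o]; module

lemma w4v_n_o_1_0 : w4 gn go g1 g0 = (-1 : ℝ) • (g0 * (g1)) + (-1 : ℝ) • (g0 * (g1 * (gn * (go)))) := by
  rw [w4_swap23, w4_swap12, w4_swap34, w4_swap23, w4_swap12, w4v_0_1_n_o]; module

lemma w4v_o_0_1_n : w4 go g0 g1 gn = (-1 : ℝ) • (g0 * (g1)) + (-1 : ℝ) • (g0 * (g1 * (gn * (go)))) := by
  rw [w4_swap12, w4_swap23, w4_swap34, w4v_0_1_n_o]; module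

lemma w4v_o_0_n_1 : w4 go g0 gn g1 = (1 : ℝ) • (g0 * (g1)) + (1 : ℝ) • (g0 * (g1 * (gn * (go)))) := by
  rw [w4_swap12, w4_swap23, w4_swap34, w4_swap23, w4v_0_1_n_o]; module

lemma w4v_o_1_0_n : w4 go g1 g0 gn = (1 : ℝ) • (g0 * (g1)) + (1 : ℝ) • (g0 * (g1 * (gn * (go)))) := by
  rw [w4_swap12, w4_swap23, w4_swap12, w4_swap34, w4v_0_1_n_o]; module

lemma w4v_o_1_n_0 : w4 go g1 gn g0 = (-1 : ℝ) • (g0 * (g1)) + (-1 : ℝ) • (g0 * (g1 * (gn * (go)))) := by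
  rw [w4_swap12, w4_swap23, w4_swap34, w4_swap23, w4_swap12, w4v_0_1_n_o]; module

lemma w4v_o_n_0_1 : w4 go gn g0 g1 = (-1 : ℝ) • (g0 * (g1)) + (-1 : ℝ) • (g0 * (g1 * (gn * (go)))) := by
  rw [w4_swap12, w4_swap23, w4_swap12, w4_swap34, w4_swap23, w4v_0_1_n_o]; module

lemma w4v_o_n_1_0 : w4 go gn g1 g0 = (1 : ℝ) • (g0 * (g1)) + (1 : ℝ) • (g0 * (g1 * (gn * (go)))) := by
  rw [w4_swap12, w4_swap23, w4_swap12, w4_swap34, w4_swap23, w4_swap12, w4v_0_1_n_o]; module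

lemma w4v_0_2_o_n : w4 g0 g2 go gn = (-1 : ℝ) • (g0 * (g2)) + (-1 : ℝ) • (g0 * (g2 * (gn * (go)))) := by
  rw [w4_swap34, w4v_0_2_n_o]; module

lemma w4v_0_n_2_o : w4 g0 gn g2 go = (-1 : ℝ) • (g0 * (g2)) + (-1 : ℝ) • (g0 * (g2 * (gn * (go)))) := by
  rw [w4_swap23, w4v_0_2_n_o]; module

lemma w4v_0_n_o_2 : w4 g0 gn go g2 = (1 : ℝ) • (g0 * (g2)) + (1 : ℝ) • (g0 * (g2 * (gn * (go)))) := by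
  rw [w4_swap34, w4_swap23, w4v_0_2_n_o]; module

lemma w4v_0_o_2_n : w4 g0 go g2 gn = (1 : ℝ) • (g0 * (g2)) + (1 : ℝ) • (g0 * (g2 * (gn * (go)))) := by
  rw [w4_swap23, w4_swap34, w4v_0_2_n_o]; module

lemma w4v_0_o_n_2 : w4 g0 go gn g2 = (-1 : ℝ) • (g0 * (g2)) + (-1 : ℝ) • (g0 * (g2 * (gn * (go)))) := by
  rw [w4_swap23, w4_swap34, w4_swap23, w4v_0_2_n_o]; module

lemma w4v_2_0_n_o : w4 g2 g0 gn go = (-1 : ℝ) • (g0 * (g2)) + (-1 : ℝ) • (g0 * (g2 * (gn * (go)))) := by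
  rw [w4_swap12, w4v_0_2_n_o]; module

lemma w4v_2_0_o_n : w4 g2 g0 go gn = (1 : ℝ) • (g0 * (g2)) + (1 : ℝ) • (g0 * (g2 * (gn * (go)))) := by
  rw [w4_swap12, w4_swap34, w4v_0_2_n_o]; module

lemma w4v_2_n_0_o : w4 g2 gn g0 go = (1 : ℝ) • (g0 * (g2)) + (1 : ℝ) • (g0 * (g2 * (gn * (go)))) := by
  rw [w4_swap23, w4_swap12, w4v_0_2_n_o]; module

lemma w4v_2_n_o_0 : w4 g2 gn go g0 = (-1 : ℝ) • (g0 * (g2)) + (-1 : ℝ) • (g0 * (g2 * (gn * (go)))) := by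
  rw [w4_swap34, w4_swap23, w4_swap12, w4v_0_2_n_o]; module

lemma w4v_2_o_0_n : w4 g2 go g0 gn = (-1 : ℝ) • (g0 * (g2)) + (-1 : ℝ) • (g0 * (g2 * (gn * (go)))) := by
  rw [w4_swap23, w4_swap12, w4_swap34, w4v_0_2_n_o]; module

lemma w4v_2_o_n_0 : w4 g2 go gn g0 = (1 : ℝ) • (g0 * (g2)) + (1 : ℝ) • (g0 * (g2 * (gn * (go)))) := by
  rw [w4_swap23, w4_swap34, w4_swap23, w4_swap12, w4v_0_2_n_o]; module

lemma w4v_n_0_2_o : w4 gn g0 g2 go = (1 : ℝ) • (g0 * (g2)) + (1 : ℝ) • (g0 * (g2 * (gn * (go)))) := by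
  rw [w4_swap12, w4_swap23, w4v_0_2_n_o]; module

lemma w4v_n_0_o_2 : w4 gn g0 go g2 = (-1 : ℝ) • (g0 * (g2)) + (-1 : ℝ) • (g0 * (g2 * (gn * (go)))) := by
  rw [w4_swap12, w4_swap34, w4_swap23, w4v_0_2_n_o]; module

lemma w4v_n_2_0_o : w4 gn g2 g0 go = (-1 : ℝ) • (g0 * (g2)) + (-1 : ℝ) • (g0 * (g2 * (gn * (go)))) := by
  rw [w4_swap12, w4_swap23, w4_swap12, w4v_0_2_n_o]; module

lemma w4v_n_2_o_0 : w4 gn g2 go g0 = (1 : ℝ) • (g0 * (g2)) + (1 : ℝ) • (g0 * (g2 * (gn * (go)))) := by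
  rw [w4_swap12, w4_swap34, w4_swap23, w4_swap12, w4v_0_2_n_o]; module

lemma w4v_n_o_0_2 : w4 gn go g0 g2 = (1 : ℝ) • (g0 * (g2)) + (1 : ℝ) • (g0 * (g2 * (gn * (go)))) := by
  rw [w4_swap23, w4_swap12, w4_swap34, w4_swap23, w4v_0_2_n_o]; module

lemma w4v_n_o_2_0 : w4 gn go g2 g0 = (-1 : ℝ) • (g0 * (g2)) + (-1 : ℝ) • (g0 * (g2 * (gn * (go)))) := by
  rw [w4_swap23, w4_swap12, w4_swap34, w4_swap23, w4_swap12, w4v_0_2_n_o]; module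

lemma w4v_o_0_2_n : w4 go g0 g2 gn = (-1 : ℝ) • (g0 * (g2)) + (-1 : ℝ) • (g0 * (g2 * (gn * (go)))) := by
  rw [w4_swap12, w4_swap23, w4_swap34, w4v_0_2_n_o]; module

lemma w4v_o_0_n_2 : w4 go g0 gn g2 = (1 : ℝ) • (g0 * (g2)) + (1 : ℝ) • (g0 * (g2 * (gn * (go)))) := by
  rw [w4_swap12, w4_swap23, w4_swap34, w4_swap23, w4v_0_2_n_o]; module

lemma w4v_o_2_0_n : w4 go g2 g0 gn = (1 : ℝ) • (g0 * (g2)) + (1 : ℝ) • (g0 * (g2 * (gn * (go)))) := by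
  rw [w4_swap12, w4_swap23, w4_swap12, w4_swap34, w4v_0_2_n_o]; module

lemma w4v_o_2_n_0 : w4 go g2 gn g0 = (-1 : ℝ) • (g0 * (g2)) + (-1 : ℝ) • (g0 * (g2 * (gn * (go)))) := by
  rw [w4_swap12, w4_swap23, w4_swap34, w4_swap23, w4_swap12, w4v_0_2_n_o]; module

lemma w4v_o_n_0_2 : w4 go gn g0 g2 = (-1 : ℝ) • (g0 * (g2)) + (-1 : ℝ) • (g0 * (g2 * (gn * (go)))) := by
  rw [w4_swap12, w4_swap23, w4_swap12, w4_swap34, w4_swap23, w4v_0_2_n_o]; module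

lemma w4v_o_n_2_0 : w4 go gn g2 g0 = (1 : ℝ) • (g0 * (g2)) + (1 : ℝ) • (g0 * (g2 * (gn * (go)))) := by
  rw [w4_swap12, w4_swap23, w4_swap12, w4_swap34, w4_swap23, w4_swap12, w4v_0_2_n_o]; module

lemma w4v_1_2_o_n : w4 g1 g2 go gn = (-1 : ℝ) • (g1 * (g2)) + (-1 : ℝ) • (g1 * (g2 * (gn * (go)))) := by
  rw [w4_swap34, w4v_1_2_n_o]; module

lemma w4v_1_n_2_o : w4 g1 gn g2 go = (-1 : ℝ) • (g1 * (g2)) + (-1 : ℝ) • (g1 * (g2 * (gn * (go)))) := by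
  rw [w4_swap23, w4v_1_2_n_o]; module

lemma w4v_1_n_o_2 : w4 g1 gn go g2 = (1 : ℝ) • (g1 * (g2)) + (1 : ℝ) • (g1 * (g2 * (gn * (go)))) := by
  rw [w4_swap34, w4_swap23, w4v_1_2_n_o]; module

lemma w4v_1_o_2_n : w4 g1 go g2 gn = (1 : ℝ) • (g1 * (g2)) + (1 : ℝ) • (g1 * (g2 * (gn * (go)))) := by
  rw [w4_swap23, w4_swap34, w4v_1_2_n_o]; module

lemma w4v_1_o_n_2 : w4 g1 go gn g2 = (-1 : ℝ) • (g1 * (g2)) + (-1 : ℝ) • (g1 * (g2 * (gn * (go)))) := by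
  rw [w4_swap23, w4_swap34, w4_swap23, w4v_1_2_n_o]; module

lemma w4v_2_1_n_o : w4 g2 g1 gn go = (-1 : ℝ) • (g1 * (g2)) + (-1 : ℝ) • (g1 * (g2 * (gn * (go)))) := by
  rw [w4_swap12, w4v_1_2_n_o]; module

lemma w4v_2_1_o_n : w4 g2 g1 go gn = (1 : ℝ) • (g1 * (g2)) + (1 : ℝ) • (g1 * (g2 * (gn * (go)))) := by
  rw [w4_swap12, w4_swap34, w4v_1_2_n_o]; module

lemma w4v_2_n_1_o : w4 g2 gn g1 go = (1 : ℝ) • (g1 * (g2)) + (1 : ℝ) • (g1 * (g2 * (gn * (go)))) := by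
  rw [w4_swap23, w4_swap12, w4v_1_2_n_o]; module

lemma w4v_2_n_o_1 : w4 g2 gn go g1 = (-1 : ℝ) • (g1 * (g2)) + (-1 : ℝ) • (g1 * (g2 * (gn * (go)))) := by
  rw [w4_swap34, w4_swap23, w4_swap12, w4v_1_2_n_o]; module

lemma w4v_2_o_1_n : w4 g2 go g1 gn = (-1 : ℝ) • (g1 * (g2)) + (-1 : ℝ) • (g1 * (g2 * (gn * (go)))) := by
  rw [w4_swap23, w4_swap12, w4_swap34, w4v_1_2_n_o]; module

lemma w4v_2_o_n_1 : w4 g2 go gn g1 = (1 : ℝ) • (g1 * (g2)) + (1 : ℝ) • (g1 * (g2 * (gn * (go)))) := by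
  rw [w4_swap23, w4_swap34, w4_swap23, w4_swap12, w4v_1_2_n_o]; module

lemma w4v_n_1_2_o : w4 gn g1 g2 go = (1 : ℝ) • (g1 * (g2)) + (1 : ℝ) • (g1 * (g2 * (gn * (go)))) := by
  rw [w4_swap12, w4_swap23, w4v_1_2_n_o]; module

lemma w4v_n_1_o_2 : w4 gn g1 go g2 = (-1 : ℝ) • (g1 * (g2)) + (-1 : ℝ) • (g1 * (g2 * (gn * (go)))) := by
  rw [w4_swap12, w4_swap34, w4_swap23, w4v_1_2_n_o]; module

lemma w4v_n_2_1_o : w4 gn g2 g1 go = (-1 : ℝ) • (g1 * (g2)) + (-1 : ℝ) • (g1 * (g2 * (gn * (go)))) := by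
  rw [w4_swap12, w4_swap23, w4_swap12, w4v_1_2_n_o]; module

lemma w4v_n_2_o_1 : w4 gn g2 go g1 = (1 : ℝ) • (g1 * (g2)) + (1 : ℝ) • (g1 * (g2 * (gn * (go)))) := by
  rw [w4_swap12, w4_swap34, w4_swap23, w4_swap12, w4v_1_2_n_o]; module

lemma w4v_n_o_1_2 : w4 gn go g1 g2 = (1 : ℝ) • (g1 * (g2)) + (1 : ℝ) • (g1 * (g2 * (gn * (go)))) := by
  rw [w4_swap23, w4_swap12, w4_swap34, w4_swap23, w4v_1_2_n_o]; module

lemma w4v_n_o_2_1 : w4 gn go g2 g1 = (-1 : ℝ) • (g1 * (g2)) + (-1 : ℝ) • (g1 * (g2 * (gn * (go)))) := by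
  rw [w4_swap23, w4_swap12, w4_swap34, w4_swap23, w4_swap12, w4v_1_2_n_o]; module

lemma w4v_o_1_2_n : w4 go g1 g2 gn = (-1 : ℝ) • (g1 * (g2)) + (-1 : ℝ) • (g1 * (g2 * (gn * (go)))) := by
  rw [w4_swap12, w4_swap23, w4_swap34, w4v_1_2_n_o]; module

lemma w4v_o_1_n_2 : w4 go g1 gn g2 = (1 : ℝ) • (g1 * (g2)) + (1 : ℝ) • (g1 * (g2 * (gn * (go)))) := by
  rw [w4_swap12, w4_swap23, w4_swap34, w4_swap23, w4v_1_2_n_o]; module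

lemma w4v_o_2_1_n : w4 go g2 g1 gn = (1 : ℝ) • (g1 * (g2)) + (1 : ℝ) • (g1 * (g2 * (gn * (go)))) := by
  rw [w4_swap12, w4_swap23, w4_swap12, w4_swap34, w4v_1_2_n_o]; module

lemma w4v_o_2_n_1 : w4 go g2 gn g1 = (-1 : ℝ) • (g1 * (g2)) + (-1 : ℝ) • (g1 * (g2 * (gn * (go)))) := by
  rw [w4_swap12, w4_swap23, w4_swap34, w4_swap23, w4_swap12, w4v_1_2_n_o]; module

lemma w4v_o_n_1_2 : w4 go gn g1 g2 = (-1 : ℝ) • (g1 * (g2)) + (-1 : ℝ) • (g1 * (g2 * (gn * (go)))) := by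
  rw [w4_swap12, w4_swap23, w4_swap12, w4_swap34, w4_swap23, w4v_1_2_n_o]; module

lemma w4v_o_n_2_1 : w4 go gn g2 g1 = (1 : ℝ) • (g1 * (g2)) + (1 : ℝ) • (g1 * (g2 * (gn * (go)))) := by
  rw [w4_swap12, w4_swap23, w4_swap12, w4_swap34, w4_swap23, w4_swap12, w4v_1_2_n_o]; module

lemma w3v_0_1_2 : w3 g0 g1 g2 = (1 : ℝ) • (g0 * (g1 * (g2))) := by
  simp only [w3, mul_assoc, g1g0, g2g0, g2g1, gng0, gng1, gng2, gog0, gog1, gog2, gogn,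
    g1g0', g2g0', g2g1', gng0', gng1', gng2', gog0', gog1', gog2', gogn',
    g0g0, g1g1, g2g2, gngn, gogo, g0g0', g1g1', g2g2', gngn', gogo',
    mul_neg, neg_mul, neg_neg, mul_one, one_mul, mul_zero, zero_mul, mul_sub, sub_mul,
    smul_mul_assoc, mul_smul_comm]
  module

lemma w3v_0_2_1 : w3 g0 g2 g1 = (-1 : ℝ) • (g0 * (g1 * (g2))) := by
  rw [w3_swap23, w3v_0_1_2]; module

lemma w3v_1_0_2 : w3 g1 g0 g2 = (-1 : ℝ) • (g0 * (g1 * (g2))) := by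
  rw [w3_swap12, w3v_0_1_2]; module

lemma w3v_1_2_0 : w3 g1 g2 g0 = (1 : ℝ) • (g0 * (g1 * (g2))) := by
  rw [w3_swap23, w3_swap12, w3v_0_1_2]; module

lemma w3v_2_0_1 : w3 g2 g0 g1 = (1 : ℝ) • (g0 * (g1 * (g2))) := by
  rw [w3_swap12, w3_swap23, w3v_0_1_2]; module

lemma w3v_2_1_0 : w3 g2 g1 g0 = (-1 : ℝ) • (g0 * (g1 * (g2))) := by
  rw [w3_swap12, w3_swap23, w3_swap12, w3v_0_1_2]; module

lemma lhsval (a0 a1 a2 an b0 b1 b2 bn u0 u1 u2 un v0 v1 v2 vn : ℝ) :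
    w4 (a0 • g0 + a1 • g1 + a2 • g2 + an • gn + (1:ℝ) • go) (b0 • g0 + b1 • g1 + b2 • g2 + bn • gn + (1:ℝ) • go) (u0 • g0 + u1 • g1 + u2 • g2 + un • gn + (1:ℝ) • go) (v0 • g0 + v1 • g1 + v2 • g2 + vn • gn + (1:ℝ) • go) =
    (a0 * b1 * un - a0 * b1 * vn - a0 * bn * u1 + a0 * bn * v1 + a0 * u1 * vn - a0 * un * v1 - a1 * b0 * un + a1 * b0 * vn + a1 * bn * u0 - a1 * bn * v0 - a1 * u0 * vn + a1 * un * v0 + an * b0 * u1 - an * b0 * v1 - an * b1 * u0 + an * b1 * v0 + an * u0 * v1 - an * u1 * v0 - b0 * u1 * vn + b0 * un * v1 + b1 * u0 * vn - b1 * un * v0 - bn * u0 * v1 + bn * u1 * v0 : ℝ) • (g0 * (g1)) + (a0 * b2 * un - a0 * b2 * vn - a0 * bn * u2 + a0 * bn * v2 + a0 * u2 * vn - a0 * un * v2 - a2 * b0 * un + a2 * b0 * vn + a2 * bn * u0 - a2 * bn * v0 - a2 * u0 * vn + a2 * un * v0 + an * b0 * u2 - an * b0 * v2 - an * b2 * u0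 + an * b2 * v0 + an * u0 * v2 - an * u2 * v0 - b0 * u2 * vn + b0 * un * v2 + b2 * u0 * vn - b2 * un * v0 - bn * u0 * v2 + bn * u2 * v0 : ℝ) • (g0 * (g2)) + (a1 * b2 * un - a1 * b2 * vn - a1 * bn * u2 + a1 * bn * v2 + a1 * u2 * vn - a1 * un * v2 - a2 * b1 * un + a2 * b1 * vn + a2 * bn * u1 - a2 * bn * v1 - a2 * u1 * vn + a2 * un * v1 + an * b1 * u2 - an * b1 * v2 - an * b2 * u1 + an * b2 * v1 + an * u1 * v2 - an * u2 * v1 - b1 * u2 * vn + b1 * un * v2 + b2 * u1 * vn - b2 * un * v1 - bn * u1 * v2 + bn * u2 * v1 : ℝ) • (g1 * (g2)) + (a0 * b1 * u2 * vn - a0 * b1 * un * v2 - a0 * b2 * u1 * vn + a0 * b2 * un * v1 + a0 * bn * u1 * v2 - a0 * bn * u2 * v1 - a1 * b0 * u2 * vn + a1 * b0 * un * v2 + a1 * b2 * u0 * vn - a1 * b2 * un * v0 - a1 * bn * u0 * v2 + a1 * bn * u2 * v0 + a2 * b0 * u1 * vn - a2 * b0 * un * v1 - a2 * b1 * u0 *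 vn + a2 * b1 * un * v0 + a2 * bn * u0 * v1 - a2 * bn * u1 * v0 - an * b0 * u1 * v2 + an * b0 * u2 * v1 + an * b1 * u0 * v2 - an * b1 * u2 * v0 - an * b2 * u0 * v1 + an * b2 * u1 * v0 : ℝ) • (g0 * (g1 * (g2 * (gn)))) + (a0 * b1 * u2 - a0 * b1 * v2 - a0 * b2 * u1 + a0 * b2 * v1 + a0 * u1 * v2 - a0 * u2 * v1 - a1 * b0 * u2 + a1 * b0 * v2 + a1 * b2 * u0 - a1 * b2 * v0 - a1 * u0 * v2 + a1 * u2 * v0 + a2 * b0 * u1 - a2 * b0 * v1 - a2 * b1 * u0 + a2 * b1 * v0 + a2 * u0 * v1 - a2 * u1 * v0 - b0 * u1 * v2 + b0 * u2 * v1 + b1 * u0 * v2 - b1 * u2 * v0 - b2 * u0 * v1 + b2 * u1 * v0 : ℝ) • (g0 * (g1 * (g2 * (go)))) + (a0 * b1 * un - a0 * b1 * vn - a0 * bn * u1 + a0 * bn * v1 + a0 * u1 * vn - a0 * un * v1 - a1 * b0 * un + a1 * b0 * vn + a1 * bn * u0 - a1 * bn * v0 - a1 * u0 * vn + a1 * un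 * v0 + an * b0 * u1 - an * b0 * v1 - an * b1 * u0 + an * b1 * v0 + an * u0 * v1 - an * u1 * v0 - b0 * u1 * vn + b0 * un * v1 + b1 * u0 * vn - b1 * un * v0 - bn * u0 * v1 + bn * u1 * v0 : ℝ) • (g0 * (g1 * (gn * (go)))) + (a0 * b2 * un - a0 * b2 * vn - a0 * bn * u2 + a0 * bn * v2 + a0 * u2 * vn - a0 * un * v2 - a2 * b0 * un + a2 * b0 * vn + a2 * bn * u0 - a2 * bn * v0 - a2 * u0 * vn + a2 * un * v0 + an * b0 * u2 - an * b0 * v2 - an * b2 * u0 + an * b2 * v0 + an * u0 * v2 - an * u2 * v0 - b0 * u2 * vn + b0 * un * v2 + b2 * u0 * vn - b2 * un * v0 - bn * u0 * v2 + bn * u2 * v0 : ℝ) • (g0 * (g2 * (gn * (go)))) + (a1 * b2 * un - a1 * b2 * vn - a1 * bn * u2 + a1 * bn * v2 + a1 * u2 * vn - a1 * un * v2 - a2 * b1 * un + a2 * b1 * vn + a2 * bn * u1 - a2 * bn * v1 - a2 * u1 * vn + a2 * un * v1 + an * b1 * u2 - an * b1 * v2 - an * b2 * u1 + an * b2 *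 v1 + an * u1 * v2 - an * u2 * v1 - b1 * u2 * vn + b1 * un * v2 + b2 * u1 * vn - b2 * un * v1 - bn * u1 * v2 + bn * u2 * v1 : ℝ) • (g1 * (g2 * (gn * (go)))) := by
  simp only [w4_add1, w4_add2, w4_add3, w4_add4, w4_smul1, w4_smul2, w4_smul3, w4_smul4,
    w4_alt12, w4_alt13, w4_alt14, w4_alt23, w4_alt24, w4_alt34,
    w4v_0_1_2_n, w4v_0_1_n_2, w4v_0_2_1_n, w4v_0_2_n_1, w4v_0_n_1_2, w4v_0_n_2_1, w4v_1_0_2_n, w4v_1_0_n_2, w4v_1_2_0_n, w4v_1_2_n_0, w4v_1_n_0_2, w4v_1_n_2_0, w4v_2_0_1_n, w4v_2_0_n_1, w4v_2_1_0_n, w4v_2_1_n_0, w4v_2_n_0_1, w4v_2_n_1_0, w4v_n_0_1_2, w4v_n_0_2_1, w4v_n_1_0_2, w4v_n_1_2_0, w4v_n_2_0_1, w4v_n_2_1_0, w4v_0_1_2_o, w4v_0_1_o_2, w4v_0_2_1_o, w4v_0_2_o_1, w4v_0_o_1_2, w4v_0_o_2_1, w4v_1_0_2_o, w4v_1_0_o_2,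 w4v_1_2_0_o, w4v_1_2_o_0, w4v_1_o_0_2, w4v_1_o_2_0, w4v_2_0_1_o, w4v_2_0_o_1, w4v_2_1_0_o, w4v_2_1_o_0, w4v_2_o_0_1, w4v_2_o_1_0, w4v_o_0_1_2, w4v_o_0_2_1, w4v_o_1_0_2, w4v_o_1_2_0, w4v_o_2_0_1, w4v_o_2_1_0, w4v_0_1_n_o, w4v_0_1_o_n, w4v_0_n_1_o, w4v_0_n_o_1, w4v_0_o_1_n, w4v_0_o_n_1, w4v_1_0_n_o, w4v_1_0_o_n, w4v_1_n_0_o, w4v_1_n_o_0, w4v_1_o_0_n, w4v_1_o_n_0, w4v_n_0_1_o, w4v_n_0_o_1, w4v_n_1_0_o, w4v_n_1_o_0, w4v_n_o_0_1, w4v_n_o_1_0, w4v_o_0_1_n, w4v_o_0_n_1, w4v_o_1_0_n, w4v_o_1_n_0, w4v_o_n_0_1, w4v_o_n_1_0, w4v_0_2_n_o, w4v_0_2_o_n, w4v_0_n_2_o, w4v_0_n_o_2, w4v_0_o_2_n, w4v_0_o_n_2, w4v_2_0_n_o, w4v_2_0_o_n, w4v_2_n_0_o, w4v_2_n_o_0,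 w4v_2_o_0_n, w4v_2_o_n_0, w4v_n_0_2_o, w4v_n_0_o_2, w4v_n_2_0_o, w4v_n_2_o_0, w4v_n_o_0_2, w4v_n_o_2_0, w4v_o_0_2_n, w4v_o_0_n_2, w4v_o_2_0_n, w4v_o_2_n_0, w4v_o_n_0_2, w4v_o_n_2_0, w4v_1_2_n_o, w4v_1_2_o_n, w4v_1_n_2_o, w4v_1_n_o_2, w4v_1_o_2_n, w4v_1_o_n_2, w4v_2_1_n_o, w4v_2_1_o_n, w4v_2_n_1_o, w4v_2_n_o_1, w4v_2_o_1_n, w4v_2_o_n_1, w4v_n_1_2_o, w4v_n_1_o_2, w4v_n_2_1_o, w4v_n_2_o_1, w4v_n_o_1_2, w4v_n_o_2_1, w4v_o_1_2_n, w4v_o_1_n_2, w4v_o_2_1_n, w4v_o_2_n_1, w4v_o_n_1_2, w4v_o_n_2_1,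
    smul_zero, add_zero, zero_add, one_smul]
  module


lemma w3val (u0 u1 u2 v0 v1 v2 w0 w1 w2 : ℝ) :
    w3 (u0 • g0 + u1 • g1 + u2 • g2) (v0 • g0 + v1 • g1 + v2 • g2) (w0 • g0 + w1 • g1 + w2 • g2) =
    (u0 * v1 * w2 - u0 * v2 * w1 - u1 * v0 * w2 + u1 * v2 * w0 + u2 * v0 * w1 - u2 * v1 * w0 : ℝ) • (g0 * (g1 * (g2))) := by
  simp only [w3_add1, w3_add2, w3_add3, w3_smul1, w3_smul2, w3_smul3,
    w3_alt12, w3_alt13, w3_alt23, w3v_0_1_2, w3v_0_2_1, w3v_1_0_2, w3v_1_2_0, w3v_2_0_1, w3v_2_1_0,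
    smul_zero, add_zero, zero_add]
  module


lemma Nb_eq : Nb = gn * go + 1 := by
  rw [Nb, show nInf = gn from rfl, show nOri = go from rfl, w2, gogn]
  module


lemma xis (x0 x1 x2 xn D : ℝ) :
    (x0 • g0 + x1 • g1 + x2 • g2 + xn • gn + (1:ℝ) • go) * (D • (g0 * (g1 * g2))) * (gn * go + 1) =
    (D * x2 : ℝ) • (g0 * (g1)) + (-D * x1 : ℝ) • (g0 * (g2)) + (D * x0 : ℝ) • (g1 * (g2)) + (-D * xn : ℝ) • (g0 * (g1 * (g2 * (gn)))) + (D : ℝ) • (g0 * (g1 * (g2 * (go)))) + (D * x2 : ℝ) • (g0 * (g1 * (gn * (go)))) + (-D * x1 : ℝ) • (g0 * (g2 * (gn * (go)))) + (D * x0 : ℝ) • (g1 * (g2 * (gn * (go)))) := by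
  simp only [add_mul, mul_add, smul_mul_assoc, mul_smul_comm, mul_assoc,
    g1g0, g2g0, g2g1, gng0, gng1, gng2, gog0, gog1, gog2, gogn,
    g1g0', g2g0', g2g1', gng0', gng1', gng2', gog0', gog1', gog2', gogn',
    g0g0, g1g1, g2g2, gngn, gogo, g0g0', g1g1', g2g2', gngn', gogo',
    mul_neg, neg_mul, neg_neg, mul_one, one_mul, mul_zero, zero_mul, mul_sub, sub_mul,
    smul_zero, zero_smul, add_zero, zero_add]
  module

lemma ι5_decomp (p : E3) (a b : ℝ) :
    ι5 ((p, a, b) : V5) = p 0 • g0 + p 1 • g1 + p 2 • g2 + a • gn + b • go := by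
  rw [V5_decomp]; simp only [map_add, map_smul]; rfl


lemma cpt_decomp (p : E3) :
    cpt p = p 0 • g0 + p 1 • g1 + p 2 • g2 + (⟪p, p⟫ / 2) • gn + (1:ℝ) • go :=
  ι5_decomp p _ _

lemma ev_decomp (p : E3) : ev p = p 0 • g0 + p 1 • g1 + p 2 • g2 := by
  rw [ev, ι5_decomp]; module

lemma Xform (c : E3) (r : ℝ) :
    cpt c - (2:ℝ)⁻¹ • (r ^ 2 • nInf) =
      c 0 • g0 + c 1 • g1 + c 2 • g2 + (⟪c, c⟫ / 2 - 2⁻¹ * r ^ 2) • gn + (1:ℝ) • go := by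
  rw [cpt_decomp, show nInf = gn from rfl]; module

lemma inner3 (x y : E3) : ⟪x, y⟫ = x 0 * y 0 + x 1 * y 1 + x 2 * y 2 := by
  simp [PiLp.inner_apply, Fin.sum_univ_three, RCLike.inner_apply, conj_trivial]; ring

end SphereAux

/-- the sphere 4-vector P₁∧P₂∧P₃∧P₄ = (C − (1/2)r²n) i_s N. -/
theorem sphere_four_vector
    (c : E3) (r : ℝ)
    (r₁ r₂ r₃ r₄ : E3)
    (h₁ : ‖r₁‖ = 1) (h₂ : ‖r₂‖ = 1) (h₃ : ‖r₃‖ = 1) (h₄ : ‖r₄‖ = 1)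
    (p₁ p₂ p₃ p₄ : E3)
    (hp₁ : p₁ = c + r • r₁) (hp₂ : p₂ = c + r • r₂)
    (hp₃ : p₃ = c + r • r₃) (hp₄ : p₄ = c + r • r₄)
    (is : Cl)
    (his : is = w3 (ev (p₁ - p₂)) (ev (p₂ - p₃)) (ev (p₃ - p₄))) :
    w4 (cpt p₁) (cpt p₂) (cpt p₃) (cpt p₄) =
      (cpt c - (2:ℝ)⁻¹ • (r ^ 2 • nInf)) * is * Nb := by
  subst hp₁ hp₂ hp₃ hp₄
  subst his
  have hn1 : r₁ 0 * r₁ 0 + r₁ 1 * r₁ 1 + r₁ 2 * r₁ 2 = 1 := by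
    rw [← inner3, real_inner_self_eq_norm_mul_norm, h₁]; norm_num
  have hn2 : r₂ 0 * r₂ 0 + r₂ 1 * r₂ 1 + r₂ 2 * r₂ 2 = 1 := by
    rw [← inner3, real_inner_self_eq_norm_mul_norm, h₂]; norm_num
  have hn3 : r₃ 0 * r₃ 0 + r₃ 1 * r₃ 1 + r₃ 2 * r₃ 2 = 1 := by
    rw [← inner3, real_inner_self_eq_norm_mul_norm, h₃]; norm_num
  have hn4 : r₄ 0 * r₄ 0 + r₄ 1 * r₄ 1 + r₄ 2 * r₄ 2 = 1 := by
    rw [← inner3, real_inner_self_eq_norm_mul_norm, h₄]; norm_num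
  rw [Xform]
  simp only [cpt_decomp, ev_decomp, Nb_eq]
  rw [lhsval, w3val, xis]
  simp only [inner3, PiLp.add_apply, PiLp.sub_apply, PiLp.smul_apply, smul_eq_mul]
  match_scalars
  · linear_combination (1/2 * r^4 * r₂ 0 * r₃ 1 - 1/2 * r^4 * r₂ 0 * r₄ 1 - 1/2 * r^4 * r₂ 1 * r₃ 0 + 1/2 * r^4 * r₂ 1 * r₄ 0 + 1/2 * r^4 * r₃ 0 * r₄ 1 - 1/2 * r^4 * r₃ 1 * r₄ 0) * hn1 + (-1/2 * r^4 * r₁ 0 * r₃ 1 + 1/2 * r^4 * r₁ 0 * r₄ 1 + 1/2 * r^4 * r₁ 1 * r₃ 0 - 1/2 * r^4 * r₁ 1 * r₄ 0 - 1/2 * r^4 * r₃ 0 * r₄ 1 + 1/2 * r^4 * r₃ 1 * r₄ 0) * hn2 + (1/2 * r^4 * r₁ 0 * r₂ 1 - 1/2 * r^4 * r₁ 0 * r₄ 1 - 1/2 * r^4 * r₁ 1 * r₂ 0 + 1/2 * r^4 * r₁ 1 * r₄ 0 + 1/2 * r^4 * r₂ 0 * r₄ 1 - 1/2 * r^4 *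 r₂ 1 * r₄ 0) * hn3 + (-1/2 * r^4 * r₁ 0 * r₂ 1 + 1/2 * r^4 * r₁ 0 * r₃ 1 + 1/2 * r^4 * r₁ 1 * r₂ 0 - 1/2 * r^4 * r₁ 1 * r₃ 0 - 1/2 * r^4 * r₂ 0 * r₃ 1 + 1/2 * r^4 * r₂ 1 * r₃ 0) * hn4
  · linear_combination (1/2 * r^4 * r₂ 0 * r₃ 2 - 1/2 * r^4 * r₂ 0 * r₄ 2 - 1/2 * r^4 * r₂ 2 * r₃ 0 + 1/2 * r^4 * r₂ 2 * r₄ 0 + 1/2 * r^4 * r₃ 0 * r₄ 2 - 1/2 * r^4 * r₃ 2 * r₄ 0) * hn1 + (-1/2 * r^4 * r₁ 0 * r₃ 2 + 1/2 * r^4 * r₁ 0 * r₄ 2 + 1/2 * r^4 * r₁ 2 * r₃ 0 - 1/2 * r^4 * r₁ 2 * r₄ 0 - 1/2 * r^4 * r₃ 0 * r₄ 2 + 1/2 * r^4 * r₃ 2 * r₄ 0) * hn2 + (1/2 * r^4 * r₁ 0 * r₂ 2 - 1/2 * r^4 * r₁ 0 * r₄ 2 - 1/2 * r^4 * r₁ 2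 * r₂ 0 + 1/2 * r^4 * r₁ 2 * r₄ 0 + 1/2 * r^4 * r₂ 0 * r₄ 2 - 1/2 * r^4 * r₂ 2 * r₄ 0) * hn3 + (-1/2 * r^4 * r₁ 0 * r₂ 2 + 1/2 * r^4 * r₁ 0 * r₃ 2 + 1/2 * r^4 * r₁ 2 * r₂ 0 - 1/2 * r^4 * r₁ 2 * r₃ 0 - 1/2 * r^4 * r₂ 0 * r₃ 2 + 1/2 * r^4 * r₂ 2 * r₃ 0) * hn4
  · linear_combination (1/2 * r^4 * r₂ 1 * r₃ 2 - 1/2 * r^4 * r₂ 1 * r₄ 2 - 1/2 * r^4 * r₂ 2 * r₃ 1 + 1/2 * r^4 * r₂ 2 * r₄ 1 + 1/2 * r^4 * r₃ 1 * r₄ 2 - 1/2 * r^4 * r₃ 2 * r₄ 1) * hn1 + (-1/2 * r^4 * r₁ 1 * r₃ 2 + 1/2 * r^4 * r₁ 1 * r₄ 2 + 1/2 * r^4 * r₁ 2 * r₃ 1 - 1/2 * r^4 * r₁ 2 * r₄ 1 - 1/2 * r^4 * r₃ 1 * r₄ 2 + 1/2 * r^4 * r₃ 2 * r₄ 1) *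 hn2 + (1/2 * r^4 * r₁ 1 * r₂ 2 - 1/2 * r^4 * r₁ 1 * r₄ 2 - 1/2 * r^4 * r₁ 2 * r₂ 1 + 1/2 * r^4 * r₁ 2 * r₄ 1 + 1/2 * r^4 * r₂ 1 * r₄ 2 - 1/2 * r^4 * r₂ 2 * r₄ 1) * hn3 + (-1/2 * r^4 * r₁ 1 * r₂ 2 + 1/2 * r^4 * r₁ 1 * r₃ 2 + 1/2 * r^4 * r₁ 2 * r₂ 1 - 1/2 * r^4 * r₁ 2 * r₃ 1 - 1/2 * r^4 * r₂ 1 * r₃ 2 + 1/2 * r^4 * r₂ 2 * r₃ 1) * hn4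
  · linear_combination (-1/2 * c 0 * r^4 * r₂ 1 * r₃ 2 + 1/2 * c 0 * r^4 * r₂ 1 * r₄ 2 + 1/2 * c 0 * r^4 * r₂ 2 * r₃ 1 - 1/2 * c 0 * r^4 * r₂ 2 * r₄ 1 - 1/2 * c 0 * r^4 * r₃ 1 * r₄ 2 + 1/2 * c 0 * r^4 * r₃ 2 * r₄ 1 + 1/2 * c 1 * r^4 * r₂ 0 * r₃ 2 - 1/2 * c 1 * r^4 * r₂ 0 * r₄ 2 - 1/2 * c 1 * r^4 * r₂ 2 * r₃ 0 + 1/2 * c 1 * r^4 * r₂ 2 * r₄ 0 + 1/2 * c 1 * r^4 * r₃ 0 * r₄ 2 - 1/2 * c 1 * r^4 * r₃ 2 * r₄ 0 - 1/2 * c 2 * r^4 * r₂ 0 * r₃ 1 + 1/2 * c 2 * r^4 * r₂ 0 * r₄ 1 + 1/2 * c 2 * r^4 * r₂ 1 * r₃ 0 - 1/2 * c 2 * r^4 * r₂ 1 * r₄ 0 - 1/2 * c 2 * r^4 * r₃ 0 * r₄ 1 + 1/2 * c 2 * r^4 * r₃ 1 * r₄ 0 - 1/2 * r^5 * r₂ 0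 * r₃ 1 * r₄ 2 + 1/2 * r^5 * r₂ 0 * r₃ 2 * r₄ 1 + 1/2 * r^5 * r₂ 1 * r₃ 0 * r₄ 2 - 1/2 * r^5 * r₂ 1 * r₃ 2 * r₄ 0 - 1/2 * r^5 * r₂ 2 * r₃ 0 * r₄ 1 + 1/2 * r^5 * r₂ 2 * r₃ 1 * r₄ 0) * hn1 + (1/2 * c 0 * r^4 * r₁ 1 * r₃ 2 - 1/2 * c 0 * r^4 * r₁ 1 * r₄ 2 - 1/2 * c 0 * r^4 * r₁ 2 * r₃ 1 + 1/2 * c 0 * r^4 * r₁ 2 * r₄ 1 + 1/2 * c 0 * r^4 * r₃ 1 * r₄ 2 - 1/2 * c 0 * r^4 * r₃ 2 * r₄ 1 - 1/2 * c 1 * r^4 * r₁ 0 * r₃ 2 + 1/2 * c 1 * r^4 * r₁ 0 * r₄ 2 + 1/2 * c 1 * r^4 * r₁ 2 * r₃ 0 - 1/2 * c 1 * r^4 * r₁ 2 * r₄ 0 - 1/2 * c 1 * r^4 * r₃ 0 * r₄ 2 + 1/2 * c 1 * r^4 * r₃ 2 * r₄ 0 + 1/2 * c 2 * r^4 * r₁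 0 * r₃ 1 - 1/2 * c 2 * r^4 * r₁ 0 * r₄ 1 - 1/2 * c 2 * r^4 * r₁ 1 * r₃ 0 + 1/2 * c 2 * r^4 * r₁ 1 * r₄ 0 + 1/2 * c 2 * r^4 * r₃ 0 * r₄ 1 - 1/2 * c 2 * r^4 * r₃ 1 * r₄ 0 + 1/2 * r^5 * r₁ 0 * r₃ 1 * r₄ 2 - 1/2 * r^5 * r₁ 0 * r₃ 2 * r₄ 1 - 1/2 * r^5 * r₁ 1 * r₃ 0 * r₄ 2 + 1/2 * r^5 * r₁ 1 * r₃ 2 * r₄ 0 + 1/2 * r^5 * r₁ 2 * r₃ 0 * r₄ 1 - 1/2 * r^5 * r₁ 2 * r₃ 1 * r₄ 0) * hn2 + (-1/2 * c 0 * r^4 * r₁ 1 * r₂ 2 + 1/2 * c 0 * r^4 * r₁ 1 * r₄ 2 + 1/2 * c 0 * r^4 * r₁ 2 * r₂ 1 - 1/2 * c 0 * r^4 * r₁ 2 * r₄ 1 - 1/2 * c 0 * r^4 * r₂ 1 * r₄ 2 + 1/2 * c 0 * r^4 * r₂ 2 * r₄ 1 + 1/2 * c 1 * r^4 * r₁ 0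 * r₂ 2 - 1/2 * c 1 * r^4 * r₁ 0 * r₄ 2 - 1/2 * c 1 * r^4 * r₁ 2 * r₂ 0 + 1/2 * c 1 * r^4 * r₁ 2 * r₄ 0 + 1/2 * c 1 * r^4 * r₂ 0 * r₄ 2 - 1/2 * c 1 * r^4 * r₂ 2 * r₄ 0 - 1/2 * c 2 * r^4 * r₁ 0 * r₂ 1 + 1/2 * c 2 * r^4 * r₁ 0 * r₄ 1 + 1/2 * c 2 * r^4 * r₁ 1 * r₂ 0 - 1/2 * c 2 * r^4 * r₁ 1 * r₄ 0 - 1/2 * c 2 * r^4 * r₂ 0 * r₄ 1 + 1/2 * c 2 * r^4 * r₂ 1 * r₄ 0 - 1/2 * r^5 * r₁ 0 * r₂ 1 * r₄ 2 + 1/2 * r^5 * r₁ 0 * r₂ 2 * r₄ 1 + 1/2 * r^5 * r₁ 1 * r₂ 0 * r₄ 2 - 1/2 * r^5 * r₁ 1 * r₂ 2 * r₄ 0 - 1/2 * r^5 * r₁ 2 * r₂ 0 * r₄ 1 + 1/2 * r^5 * r₁ 2 * r₂ 1 * r₄ 0) * hn3 + (1/2 * c 0 * r^4 * r₁ 1 *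 r₂ 2 - 1/2 * c 0 * r^4 * r₁ 1 * r₃ 2 - 1/2 * c 0 * r^4 * r₁ 2 * r₂ 1 + 1/2 * c 0 * r^4 * r₁ 2 * r₃ 1 + 1/2 * c 0 * r^4 * r₂ 1 * r₃ 2 - 1/2 * c 0 * r^4 * r₂ 2 * r₃ 1 - 1/2 * c 1 * r^4 * r₁ 0 * r₂ 2 + 1/2 * c 1 * r^4 * r₁ 0 * r₃ 2 + 1/2 * c 1 * r^4 * r₁ 2 * r₂ 0 - 1/2 * c 1 * r^4 * r₁ 2 * r₃ 0 - 1/2 * c 1 * r^4 * r₂ 0 * r₃ 2 + 1/2 * c 1 * r^4 * r₂ 2 * r₃ 0 + 1/2 * c 2 * r^4 * r₁ 0 * r₂ 1 - 1/2 * c 2 * r^4 * r₁ 0 * r₃ 1 - 1/2 * c 2 * r^4 * r₁ 1 * r₂ 0 + 1/2 * c 2 * r^4 * r₁ 1 * r₃ 0 + 1/2 * c 2 * r^4 * r₂ 0 * r₃ 1 - 1/2 * c 2 * r^4 * r₂ 1 * r₃ 0 + 1/2 * r^5 * r₁ 0 * r₂ 1 * r₃ 2 - 1/2 * r^5 * r₁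 0 * r₂ 2 * r₃ 1 - 1/2 * r^5 * r₁ 1 * r₂ 0 * r₃ 2 + 1/2 * r^5 * r₁ 1 * r₂ 2 * r₃ 0 + 1/2 * r^5 * r₁ 2 * r₂ 0 * r₃ 1 - 1/2 * r^5 * r₁ 2 * r₂ 1 * r₃ 0) * hn4
  · ring1
  · linear_combination (1/2 * r^4 * r₂ 0 * r₃ 1 - 1/2 * r^4 * r₂ 0 * r₄ 1 - 1/2 * r^4 * r₂ 1 * r₃ 0 + 1/2 * r^4 * r₂ 1 * r₄ 0 + 1/2 * r^4 * r₃ 0 * r₄ 1 - 1/2 * r^4 * r₃ 1 * r₄ 0) * hn1 + (-1/2 * r^4 * r₁ 0 * r₃ 1 + 1/2 * r^4 * r₁ 0 * r₄ 1 + 1/2 * r^4 * r₁ 1 * r₃ 0 - 1/2 * r^4 * r₁ 1 * r₄ 0 - 1/2 * r^4 * r₃ 0 * r₄ 1 + 1/2 * r^4 * r₃ 1 * r₄ 0) * hn2 + (1/2 * r^4 * r₁ 0 * r₂ 1 - 1/2 * r^4 * r₁ 0 * r₄ 1 - 1/2 * r^4 * r₁ 1 * r₂ 0 + 1/2 * r^4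 * r₁ 1 * r₄ 0 + 1/2 * r^4 * r₂ 0 * r₄ 1 - 1/2 * r^4 * r₂ 1 * r₄ 0) * hn3 + (-1/2 * r^4 * r₁ 0 * r₂ 1 + 1/2 * r^4 * r₁ 0 * r₃ 1 + 1/2 * r^4 * r₁ 1 * r₂ 0 - 1/2 * r^4 * r₁ 1 * r₃ 0 - 1/2 * r^4 * r₂ 0 * r₃ 1 + 1/2 * r^4 * r₂ 1 * r₃ 0) * hn4
  · linear_combination (1/2 * r^4 * r₂ 0 * r₃ 2 - 1/2 * r^4 * r₂ 0 * r₄ 2 - 1/2 * r^4 * r₂ 2 * r₃ 0 + 1/2 * r^4 * r₂ 2 * r₄ 0 + 1/2 * r^4 * r₃ 0 * r₄ 2 - 1/2 * r^4 * r₃ 2 * r₄ 0) * hn1 + (-1/2 * r^4 * r₁ 0 * r₃ 2 + 1/2 * r^4 * r₁ 0 * r₄ 2 + 1/2 * r^4 * r₁ 2 * r₃ 0 - 1/2 * r^4 * r₁ 2 * r₄ 0 - 1/2 * r^4 * r₃ 0 * r₄ 2 + 1/2 * r^4 * r₃ 2 * r₄ 0) * hn2 + (1/2 * r^4 * r₁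 0 * r₂ 2 - 1/2 * r^4 * r₁ 0 * r₄ 2 - 1/2 * r^4 * r₁ 2 * r₂ 0 + 1/2 * r^4 * r₁ 2 * r₄ 0 + 1/2 * r^4 * r₂ 0 * r₄ 2 - 1/2 * r^4 * r₂ 2 * r₄ 0) * hn3 + (-1/2 * r^4 * r₁ 0 * r₂ 2 + 1/2 * r^4 * r₁ 0 * r₃ 2 + 1/2 * r^4 * r₁ 2 * r₂ 0 - 1/2 * r^4 * r₁ 2 * r₃ 0 - 1/2 * r^4 * r₂ 0 * r₃ 2 + 1/2 * r^4 * r₂ 2 * r₃ 0) * hn4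
  · linear_combination (1/2 * r^4 * r₂ 1 * r₃ 2 - 1/2 * r^4 * r₂ 1 * r₄ 2 - 1/2 * r^4 * r₂ 2 * r₃ 1 + 1/2 * r^4 * r₂ 2 * r₄ 1 + 1/2 * r^4 * r₃ 1 * r₄ 2 - 1/2 * r^4 * r₃ 2 * r₄ 1) * hn1 + (-1/2 * r^4 * r₁ 1 * r₃ 2 + 1/2 * r^4 * r₁ 1 * r₄ 2 + 1/2 * r^4 * r₁ 2 * r₃ 1 - 1/2 * r^4 * r₁ 2 * r₄ 1 - 1/2 * r^4 * r₃ 1 * r₄ 2 + 1/2 * r^4 * r₃ 2 * r₄ 1) * hn2 + (1/2 * r^4 * r₁ 1 * r₂ 2 - 1/2 * r^4 * r₁ 1 * r₄ 2 - 1/2 * r^4 * r₁ 2 * r₂ 1 + 1/2 * r^4 * r₁ 2 * r₄ 1 + 1/2 * r^4 * r₂ 1 * r₄ 2 - 1/2 * r^4 * r₂ 2 * r₄ 1) * hn3 + (-1/2 * r^4 * r₁ 1 * r₂ 2 + 1/2 * r^4 * r₁ 1 * r₃ 2 + 1/2 * r^4 * r₁ 2 * r₂ 1 - 1/2 * r^4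 * r₁ 2 * r₃ 1 - 1/2 * r^4 * r₂ 1 * r₃ 2 + 1/2 * r^4 * r₂ 2 * r₃ 1) * hn4
end
end
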